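/- arXiv:math/0701262 — 6 statements merged into one kernel-verified Lean document; each statement's English description precedes it below -/
import Mathlib

section
/- Let f(x) = Σ aₙxⁿ and g(x) = Σ bₙxⁿ be real power series converging on (-R,R) with bₙ > 0 for all n. If the sequence {aₙ/bₙ} is increasing, then the function h(x) = f(x)/g(x) is increasing on (0,R). -/
open scoped ENNReal NNReal

/-- Key pointwise inequality for the symmetrized double-sum term. -/
lemma stmt0_aux (a b : ℕ → ℝ) (hb : ∀ n, 0 < b n)
    (hmono : Monotone fun n => a n / b n)
    (x y : ℝ) (hx : 0 < x) (hxy : x ≤ y) (m n : ℕ) :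
    0 ≤ (a m * y ^ m * (b n * x ^ n) - a m * x ^ m * (b n * y ^ n)) +
        (a n * y ^ n * (b m * x ^ m) - a n * x ^ n * (b m * y ^ m)) := by
  have hy : 0 < y := lt_of_lt_of_le hx hxy
  have key : ∀ m n : ℕ, m ≤ n →
      0 ≤ (a m * y ^ m * (b n * x ^ n) - a m * x ^ m * (b n * y ^ n)) +
        (a n * y ^ n * (b m * x ^ m) - a n * x ^ n * (b m * y ^ m)) := by
    intro m n hmn
    have hab : a m * b n ≤ a n * b m := by
      have := hmono hmn
      rw [div_le_div_iff₀ (hb m) (hb n)] at this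
      linarith
    have hpow : y ^ m * x ^ n ≤ x ^ m * y ^ n := by
      obtain ⟨k, rfl⟩ := Nat.exists_eq_add_of_le hmn
      rw [pow_add, pow_add]
      have hk : x ^ k ≤ y ^ k := pow_le_pow_left₀ hx.le hxy k
      have h1 : 0 < x ^ m := pow_pos hx m
      have h2 : 0 < y ^ m := pow_pos hy m
      nlinarith [mul_le_mul_of_nonneg_left hk (mul_nonneg h1.le h2.le)]
    nlinarith [mul_nonneg (sub_nonneg.2 hab) (sub_nonneg.2 hpow)]
  rcases le_total m n with h | h
  · exact key m n h
  · have := key n m h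
    linarith

set_option maxHeartbeats 800000 in
/-- If `f = Σ aₙ xⁿ` and `g = Σ bₙ xⁿ` converge on `(-R, R)` (with
`0 < R ≤ ∞`), `bₙ > 0` for all `n`, and `aₙ/bₙ` is increasing, then `f/g` is
increasing on `(0, R)`. -/
theorem stmt0 (R : ℝ≥0∞) (hR : 0 < R) (a b : ℕ → ℝ) (f g : ℝ → ℝ)
    (hf : ∀ x : ℝ, (‖x‖₊ : ℝ≥0∞) < R → HasSum (fun n => a n * x ^ n) (f x))
    (hg : ∀ x : ℝ, (‖x‖₊ : ℝ≥0∞) < R → HasSum (fun n => b n * x ^ n) (g x))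
    (hb : ∀ n, 0 < b n)
    (hmono : Monotone fun n => a n / b n) :
    MonotoneOn (fun x => f x / g x) {x : ℝ | 0 < x ∧ (‖x‖₊ : ℝ≥0∞) < R} := by
  rintro x ⟨hx, hxR⟩ y ⟨hy, hyR⟩ hxy
  have hfx := hf x hxR
  have hfy := hf y hyR
  have hgx := hg x hxR
  have hgy := hg y hyR
  -- positivity of g
  have hgx_pos : 0 < g x := by
    have h0 : b 0 * x ^ 0 ≤ g x :=
      le_hasSum hgx 0 (fun i _ => mul_nonneg (hb i).le (pow_nonneg hx.le i))
    simpa using lt_of_lt_of_le (by simpa using hb 0) h0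
  have hgy_pos : 0 < g y := by
    have h0 : b 0 * y ^ 0 ≤ g y :=
      le_hasSum hgy 0 (fun i _ => mul_nonneg (hb i).le (pow_nonneg hy.le i))
    simpa using lt_of_lt_of_le (by simpa using hb 0) h0
  -- double sums
  have h1 : HasSum (fun p : ℕ × ℕ => (a p.1 * y ^ p.1) * (b p.2 * x ^ p.2)) (f y * g x) :=
    hfy.mul hgx ((hfy.summable.norm.mul_norm hgx.summable.norm).of_norm)
  have h2 : HasSum (fun p : ℕ × ℕ => (a p.1 * x ^ p.1) * (b p.2 * y ^ p.2)) (f x * g y) :=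
    hfx.mul hgy ((hfx.summable.norm.mul_norm hgy.summable.norm).of_norm)
  have hD : HasSum
      (fun p : ℕ × ℕ => (a p.1 * y ^ p.1) * (b p.2 * x ^ p.2)
        - (a p.1 * x ^ p.1) * (b p.2 * y ^ p.2)) (f y * g x - f x * g y) :=
    h1.sub h2
  have hD' : HasSum
      ((fun p : ℕ × ℕ => (a p.1 * y ^ p.1) * (b p.2 * x ^ p.2)
        - (a p.1 * x ^ p.1) * (b p.2 * y ^ p.2)) ∘ ⇑(Equiv.prodComm ℕ ℕ))
      (f y * g x - f x * g y) :=
    (Equiv.prodComm ℕ ℕ).hasSum_iff.mpr hD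
  have hDD := hD.add hD'
  have hnonneg : 0 ≤ (f y * g x - f x * g y) + (f y * g x - f x * g y) := by
    refine hasSum_le (fun p => ?_) hasSum_zero hDD
    have := stmt0_aux a b hb hmono x y hx hxy p.1 p.2
    simp only [Pi.zero_apply, Function.comp_apply, Equiv.prodComm_apply, Prod.fst_swap,
      Prod.snd_swap]
    linarith
  have hcross : f x * g y ≤ f y * g x := by linarith
  simp only
  rw [div_le_div_iff₀ hgx_pos hgy_pos]
  linarith
end

section
/- Let f : I → (0,∞) be differentiable on an open subinterval I of (0,∞). Then f is GG-convex (i.e., f(√(xy)) ≤ √(f(x)f(y)) for all x,y ∈ I) if and only if x f'(x)/f(x) is increasing on I. -/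
lemma deriv_le_slope_of_midpoint {g : ℝ → ℝ} {a b G : ℝ} (hab : a < b)
    (hmid : ∀ x ∈ Set.Icc a b, ∀ y ∈ Set.Icc a b, g ((x + y) / 2) ≤ (g x + g y) / 2)
    (hg : HasDerivAt g G a) : G ≤ (g b - g a) / (b - a) := by
  have hd : (0:ℝ) < b - a := by linarith
  set c : ℕ → ℝ := fun n => a + (b - a) / 2 ^ n with hc
  have hpow : ∀ n : ℕ, (0:ℝ) < 2 ^ n := fun n => by positivity
  have hcgt : ∀ n, a < c n := fun n => by
    simp only [hc]; have := hpow n; nlinarith [div_pos hd this]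
  have hcle : ∀ n, c n ≤ b := fun n => by
    simp only [hc]
    have h1 : (1:ℝ) ≤ 2 ^ n := one_le_pow₀ (by norm_num)
    have : (b - a) / 2 ^ n ≤ (b - a) / 1 := by
      apply div_le_div_of_nonneg_left hd.le one_pos h1
    simp at this; linarith
  have hcmem : ∀ n, c n ∈ Set.Icc a b := fun n => ⟨(hcgt n).le, hcle n⟩
  set s : ℕ → ℝ := fun n => (g (c n) - g a) / ((b - a) / 2 ^ n) with hs
  have hmidc : ∀ n, c (n + 1) = (a + c n) / 2 := fun n => by
    simp only [hc]; rw [pow_succ]; field_simp; ring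
  have hstep : ∀ n, s (n + 1) ≤ s n := by
    intro n
    have h1 := hmid a ⟨le_refl a, by linarith⟩ (c n) (hcmem n)
    rw [← hmidc n] at h1
    have h2 : (0:ℝ) < (b - a) / 2 ^ n := div_pos hd (hpow n)
    have h3 : (0:ℝ) < (b - a) / 2 ^ (n+1) := div_pos hd (hpow (n+1))
    simp only [hs]
    rw [div_le_div_iff₀ h3 h2]
    have hp : (2:ℝ) ^ (n+1) = 2 * 2 ^ n := by ring
    have h1' : g (c (n+1)) - g a ≤ (g (c n) - g a) / 2 := by linarith
    have h4 := mul_le_mul_of_nonneg_right h1' h2.le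
    have e2 : (b - a) / 2 ^ (n+1) = ((b - a) / 2 ^ n) / 2 := by rw [hp]; ring
    rw [e2]; nlinarith [h4]
  have hanti : Antitone s := antitone_nat_of_succ_le hstep
  have hlim : Filter.Tendsto s Filter.atTop (nhds G) := by
    have hcl : Filter.Tendsto c Filter.atTop (nhds a) := by
      have : Filter.Tendsto (fun n : ℕ => (b - a) / 2 ^ n) Filter.atTop (nhds 0) := by
        simp_rw [div_eq_mul_inv, ← inv_pow]
        have := tendsto_pow_atTop_nhds_zero_of_lt_one (by norm_num : (0:ℝ) ≤ 2⁻¹)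
          (by norm_num : (2:ℝ)⁻¹ < 1)
        simpa using this.const_mul (b - a)
      have := this.const_add a
      simpa using this
    have hne : ∀ n, c n ∈ {x | x ≠ a} := fun n => (hcgt n).ne'
    have hcl' : Filter.Tendsto c Filter.atTop (nhdsWithin a {x | x ≠ a}) :=
      tendsto_nhdsWithin_of_tendsto_nhds_of_eventually_within c hcl
        (Filter.Eventually.of_forall hne)
    have hslope := (hasDerivAt_iff_tendsto_slope.mp hg).comp hcl'
    have : ∀ n, slope g a (c n) = s n := by
      intro n
      simp only [slope_def_field, hs, hc]
      congr 1 <;> ring_nf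
    exact Filter.Tendsto.congr this hslope
  have : G ≤ s 0 := le_of_tendsto hlim (Filter.Eventually.of_forall fun n => hanti (Nat.zero_le n))
  simpa [hs, hc] using this

lemma slope_le_deriv_of_midpoint {g : ℝ → ℝ} {a b G : ℝ} (hab : a < b)
    (hmid : ∀ x ∈ Set.Icc a b, ∀ y ∈ Set.Icc a b, g ((x + y) / 2) ≤ (g x + g y) / 2)
    (hg : HasDerivAt g G b) : (g b - g a) / (b - a) ≤ G := by
  have hinner : HasDerivAt (fun x : ℝ => a + b - x) (-1) a := by
    simpa using (hasDerivAt_id a).const_sub (a + b)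
  have hgb : HasDerivAt g G ((fun x : ℝ => a + b - x) a) := by simpa using hg
  have hcomp : HasDerivAt (g ∘ fun x : ℝ => a + b - x) (G * (-1)) a := hgb.comp a hinner
  have hmid' : ∀ x ∈ Set.Icc a b, ∀ y ∈ Set.Icc a b,
      (g ∘ fun x : ℝ => a + b - x) ((x + y) / 2) ≤
        ((g ∘ fun x : ℝ => a + b - x) x + (g ∘ fun x : ℝ => a + b - x) y) / 2 := by
    intro x hx y hy
    have hx' : a + b - x ∈ Set.Icc a b := ⟨by linarith [hx.2], by linarith [hx.1]⟩
    have hy' : a + b - y ∈ Set.Icc a b := ⟨by linarith [hy.2], by linarith [hy.1]⟩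
    have := hmid _ hx' _ hy'
    simpa [Function.comp, show a + b - (x + y) / 2 = ((a + b - x) + (a + b - y)) / 2 by ring]
      using this
  have := deriv_le_slope_of_midpoint hab hmid' hcomp
  simp only [Function.comp] at this
  have e1 : a + b - b = a := by ring
  have e2 : a + b - a = b := by ring
  rw [e1, e2] at this
  have hd : (0:ℝ) < b - a := by linarith
  have e3 : (g a - g b) / (b - a) = -((g b - g a) / (b - a)) := by ring
  rw [e3] at this
  linarith

/-- A differentiable positive function on an open subinterval `I` of
`(0,∞)` is GG-convex iff `x f'(x)/f(x)` is increasing on `I`. -/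
theorem stmt5 (I : Set ℝ) (hIopen : IsOpen I) (hIconv : Convex ℝ I)
    (hIsub : I ⊆ Set.Ioi 0) (f f' : ℝ → ℝ)
    (hderiv : ∀ x ∈ I, HasDerivAt f (f' x) x) (hpos : ∀ x ∈ I, 0 < f x) :
    (∀ x ∈ I, ∀ y ∈ I, f (Real.sqrt (x * y)) ≤ Real.sqrt (f x * f y)) ↔
      MonotoneOn (fun x => x * f' x / f x) I := by
  set J : Set ℝ := Real.exp ⁻¹' I with hJ
  set g : ℝ → ℝ := fun t => Real.log (f (Real.exp t)) with hg
  set G : ℝ → ℝ := fun t => Real.exp t * f' (Real.exp t) / f (Real.exp t) with hG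
  -- basic facts
  have hJopen : IsOpen J := Real.continuous_exp.isOpen_preimage _ hIopen
  have hJconv : Convex ℝ J := by
    rw [convex_iff_ordConnected]
    constructor
    intro s hs t ht u hu
    have : Real.exp u ∈ Set.Icc (Real.exp s) (Real.exp t) :=
      ⟨Real.exp_le_exp.2 hu.1, Real.exp_le_exp.2 hu.2⟩
    exact hIconv.ordConnected.out hs ht this
  have hmemJ : ∀ x ∈ I, Real.log x ∈ J := by
    intro x hx
    have : Real.exp (Real.log x) = x := Real.exp_log (hIsub hx)
    simp [hJ, this, hx]
  have hgderiv : ∀ t ∈ J, HasDerivAt g (G t) t := by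
    intro t ht
    have h1 : HasDerivAt (fun u => f (Real.exp u)) (f' (Real.exp t) * Real.exp t) t :=
      (hderiv _ ht).comp t (Real.hasDerivAt_exp t)
    have h2 := (Real.hasDerivAt_log (ne_of_gt (hpos _ ht))).comp t h1
    refine h2.congr_deriv ?_
    simp [hG]
    field_simp
  -- sqrt as exp of average of logs
  have hsqrt : ∀ x : ℝ, 0 < x → ∀ y : ℝ, 0 < y →
      Real.sqrt (x * y) = Real.exp ((Real.log x + Real.log y) / 2) := by
    intro x hx y hy
    rw [Real.sqrt_eq_rpow, Real.rpow_def_of_pos (mul_pos hx hy), Real.log_mul hx.ne' hy.ne']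
    congr 1
    ring
  constructor
  · -- GG-convex → monotone
    intro hGG
    -- midpoint convexity of g on J
    have hmid : ∀ s ∈ J, ∀ t ∈ J, g ((s + t) / 2) ≤ (g s + g t) / 2 := by
      intro s hs t ht
      have hmidJ : (s + t) / 2 ∈ J := by
        have := hJconv hs ht (by norm_num : (0:ℝ) ≤ 1/2) (by norm_num : (0:ℝ) ≤ 1/2)
          (by norm_num)
        rwa [show (1/2:ℝ) • s + (1/2:ℝ) • t = (s + t) / 2 by simp [smul_eq_mul]; ring] at this
      have hxI : Real.exp s ∈ I := hs
      have hyI : Real.exp t ∈ I := ht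
      have h := hGG _ hxI _ hyI
      have hx0 : (0:ℝ) < Real.exp s := Real.exp_pos s
      have hy0 : (0:ℝ) < Real.exp t := Real.exp_pos t
      rw [hsqrt _ hx0 _ hy0, Real.log_exp, Real.log_exp] at h
      have hmI : Real.exp ((s + t) / 2) ∈ I := hmidJ
      have hfm : (0:ℝ) < f (Real.exp ((s + t) / 2)) := hpos _ hmI
      have hfx : (0:ℝ) < f (Real.exp s) := hpos _ hxI
      have hfy : (0:ℝ) < f (Real.exp t) := hpos _ hyI
      have : g ((s + t) / 2) ≤ Real.log (Real.sqrt (f (Real.exp s) * f (Real.exp t))) :=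
        Real.log_le_log hfm h
      rwa [Real.log_sqrt (by positivity), Real.log_mul hfx.ne' hfy.ne'] at this
    intro x hx y hy hxy
    rcases eq_or_lt_of_le hxy with rfl | hlt
    · exact le_refl _
    have hx0 : (0:ℝ) < x := hIsub hx
    have hy0 : (0:ℝ) < y := hIsub hy
    set a := Real.log x with ha
    set b := Real.log y with hb
    have haJ : a ∈ J := hmemJ x hx
    have hbJ : b ∈ J := hmemJ y hy
    have hab : a < b := Real.log_lt_log hx0 hlt
    have hIcc : Set.Icc a b ⊆ J := hJconv.ordConnected.out haJ hbJ
    have hmid' : ∀ s ∈ Set.Icc a b, ∀ t ∈ Set.Icc a b, g ((s + t) / 2) ≤ (g s + g t) / 2 :=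
      fun s hs t ht => hmid s (hIcc hs) t (hIcc ht)
    have h1 := deriv_le_slope_of_midpoint hab hmid' (hgderiv a haJ)
    have h2 := slope_le_deriv_of_midpoint hab hmid' (hgderiv b hbJ)
    have hGa : G a = x * f' x / f x := by simp [hG, ha, Real.exp_log hx0]
    have hGb : G b = y * f' y / f y := by simp [hG, hb, Real.exp_log hy0]
    calc x * f' x / f x = G a := hGa.symm
      _ ≤ G b := le_trans h1 h2
      _ = y * f' y / f y := hGb
  · -- monotone → GG-convex
    intro hmono
    have hdiff : DifferentiableOn ℝ g J := fun t ht =>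
      (hgderiv t ht).differentiableAt.differentiableWithinAt
    have hcont : ContinuousOn g J := hdiff.continuousOn
    have hderivmono : MonotoneOn (deriv g) (interior J) := by
      rw [hJopen.interior_eq]
      intro s hs t ht hst
      rw [(hgderiv s hs).deriv, (hgderiv t ht).deriv]
      exact hmono (show Real.exp s ∈ I from hs) (show Real.exp t ∈ I from ht)
        (Real.exp_le_exp.2 hst)
    have hconv : ConvexOn ℝ J g := by
      apply hderivmono.convexOn_of_deriv hJconv hcont
      rw [hJopen.interior_eq]; exact hdiff
    intro x hx y hy
    have hx0 : (0:ℝ) < x := hIsub hx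
    have hy0 : (0:ℝ) < y := hIsub hy
    set a := Real.log x with ha
    set b := Real.log y with hb
    have haJ : a ∈ J := hmemJ x hx
    have hbJ : b ∈ J := hmemJ y hy
    have hkey := hconv.2 haJ hbJ (by norm_num : (0:ℝ) ≤ 1/2) (by norm_num : (0:ℝ) ≤ 1/2)
      (by norm_num)
    simp only [smul_eq_mul] at hkey
    have heq : (1/2 : ℝ) * a + (1/2 : ℝ) * b = (a + b) / 2 := by ring
    rw [heq] at hkey
    have hmidJ : (a + b) / 2 ∈ J := by
      have := hJconv haJ hbJ (by norm_num : (0:ℝ) ≤ 1/2) (by norm_num : (0:ℝ) ≤ 1/2)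
        (by norm_num)
      rwa [show (1/2:ℝ) • a + (1/2:ℝ) • b = (a + b) / 2 by simp [smul_eq_mul]; ring] at this
    have hmI : Real.exp ((a + b) / 2) ∈ I := hmidJ
    have hsq : Real.sqrt (x * y) = Real.exp ((a + b) / 2) := hsqrt x hx0 y hy0
    rw [hsq]
    have hfm : (0:ℝ) < f (Real.exp ((a + b) / 2)) := hpos _ hmI
    have hfx : (0:ℝ) < f x := hpos _ hx
    have hfy : (0:ℝ) < f y := hpos _ hy
    have hga : g a = Real.log (f x) := by simp [hg, ha, Real.exp_log hx0]
    have hgb : g b = Real.log (f y) := by simp [hg, hb, Real.exp_log hy0]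
    rw [hga, hgb] at hkey
    have hrhs : (1/2 : ℝ) * Real.log (f x) + (1/2 : ℝ) * Real.log (f y)
        = Real.log (Real.sqrt (f x * f y)) := by
      rw [Real.log_sqrt (by positivity), Real.log_mul hfx.ne' hfy.ne']; ring
    rw [hrhs] at hkey
    have := Real.exp_le_exp.2 hkey
    rwa [Real.exp_log hfm, Real.exp_log (Real.sqrt_pos.2 (by positivity))] at this
end

section
/- Let f(x) = Σ aₙxⁿ with all aₙ > 0, convergent on (-R,R), 0 < R < ∞. If {n aₙ Rⁿ} is increasing and {n! aₙ Rⁿ/(1/2)ₙ} is decreasing (where (1/2)ₙ is the Pochhammer symbol), then 1/f is concave on (0,R); in particular f((x+y)/2) ≤ 2f(x)f(y)/(f(x)+f(y)) for all x,y ∈ (0,R), with equality iff x = y. -/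
/-- The rising factorial (Pochhammer symbol) `(a)ₙ = a(a+1)⋯(a+n−1)`. -/
def ascFac (a : ℝ) : ℕ → ℝ
  | 0 => 1
  | n + 1 => ascFac a n * (a + n)

open Finset

/-- Abel summation by parts. -/
lemma sum_abel (f g : ℕ → ℝ) (n : ℕ) :
    ∑ k ∈ range (n+1), f k * g k
      = (∑ k ∈ range n, (∑ i ∈ range (k+1), f i) * (g k - g (k+1)))
        + (∑ i ∈ range (n+1), f i) * g n := by
  induction n with
  | zero => simp
  | succ n ih =>
    rw [sum_range_succ (fun k => f k * g k), ih,
      sum_range_succ (fun k => (∑ i ∈ range (k+1), f i) * (g k - g (k+1))),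
      sum_range_succ f (n+1)]
    ring

lemma W_closed (m : ℕ) (k : ℕ) :
    ∑ i ∈ range (k+1), ((m:ℝ)*((m:ℝ)-1) - 6*(i:ℝ)*((m:ℝ)-(i:ℝ)))
      = ((k:ℝ)+1)*((m:ℝ)-(k:ℝ))*((m:ℝ)-1-2*(k:ℝ)) := by
  induction k with
  | zero => norm_num
  | succ k ih =>
    rw [sum_range_succ, ih]
    push_cast
    ring

lemma sum_cast_id (N : ℕ) :
    ∑ i ∈ range N, (i:ℝ) = (N:ℝ)*((N:ℝ)-1)/2 := by
  induction N with
  | zero => simp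
  | succ N ih => rw [sum_range_succ, ih]; push_cast; ring

/-- The main numeric inequality: `∑_{i<⌊m/2⌋} (m−1−2i)(m−3i−2)/(m−i−1) ≥ 0`. -/
lemma main_numeric (m : ℕ) (hm : 2 ≤ m) :
    0 ≤ ∑ i ∈ range (m/2),
        ((m:ℝ)-1-2*(i:ℝ))*((m:ℝ)-3*(i:ℝ)-2)/((m:ℝ)-(i:ℝ)-1) := by
  set μ : ℝ := (m:ℝ) with hμdef
  set N : ℕ := m/2 with hNdef
  have hN1 : 1 ≤ N := by omega
  have hNm : 2*N ≤ m := by omega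
  have hbig : ∀ i ∈ range N, (1:ℝ) ≤ μ - (i:ℝ) - 1 := by
    intro i hi
    rw [mem_range] at hi
    have : (i:ℝ) ≤ (N:ℝ) - 1 := by
      have : (i:ℝ)+1 ≤ (N:ℝ) := by exact_mod_cast hi
      linarith
    have h2N : 2*(N:ℝ) ≤ μ := by rw [hμdef]; exact_mod_cast hNm
    have hNc : 1 ≤ (N:ℝ) := by exact_mod_cast hN1
    nlinarith
  -- rewrite each term
  have hterm : ∀ i ∈ range N,
      (μ-1-2*(i:ℝ))*(μ-3*(i:ℝ)-2)/(μ-(i:ℝ)-1)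
        = 6*(μ-1-(i:ℝ)) - (7*μ-5) + (μ-1)*(2*μ-1)*(1/(μ-(i:ℝ)-1)) := by
    intro i hi
    have h := hbig i hi
    have hne : μ-(i:ℝ)-1 ≠ 0 := by linarith
    field_simp
    ring
  rw [sum_congr rfl hterm]
  have hsplit : ∑ i ∈ range N,
      (6*(μ-1-(i:ℝ)) - (7*μ-5) + (μ-1)*(2*μ-1)*(1/(μ-(i:ℝ)-1)))
      = 6*(∑ i ∈ range N, (μ-1-(i:ℝ))) - (7*μ-5)*(N:ℝ)
        + (μ-1)*(2*μ-1)*(∑ i ∈ range N, 1/(μ-(i:ℝ)-1)) := by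
    rw [sum_add_distrib, sum_sub_distrib, ← mul_sum, ← mul_sum, sum_const, card_range]
    push_cast
    ring
  rw [hsplit]
  set A : ℝ := ∑ i ∈ range N, (μ-1-(i:ℝ)) with hAdef
  set H : ℝ := ∑ i ∈ range N, 1/(μ-(i:ℝ)-1) with hHdef
  have hA : A = (N:ℝ)*μ - (N:ℝ) - (N:ℝ)*((N:ℝ)-1)/2 := by
    rw [hAdef, sum_sub_distrib, sum_const, card_range, sum_cast_id]
    push_cast
    ring
  have hApos : 0 < A := by
    calc (0:ℝ) < N := by exact_mod_cast hN1
    _ = ∑ i ∈ range N, (1:ℝ) := by rw [sum_const, card_range, nsmul_eq_mul, mul_one]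
    _ ≤ A := sum_le_sum (fun i hi => by have := hbig i hi; linarith)
  -- Cauchy–Schwarz: N² ≤ A * H
  have hCS : ((N:ℝ))^2 ≤ A * H := by
    have key := Finset.sum_mul_sq_le_sq_mul_sq (range N)
      (fun i => Real.sqrt (μ-(i:ℝ)-1)) (fun i => 1/Real.sqrt (μ-(i:ℝ)-1))
    have e1 : ∑ i ∈ range N,
        Real.sqrt (μ-(i:ℝ)-1) * (1/Real.sqrt (μ-(i:ℝ)-1)) = (N:ℝ) := by
      have e1' : ∀ i ∈ range N,
          Real.sqrt (μ-(i:ℝ)-1) * (1/Real.sqrt (μ-(i:ℝ)-1)) = 1 := by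
        intro i hi
        have := hbig i hi
        have hpos : 0 < Real.sqrt (μ-(i:ℝ)-1) := Real.sqrt_pos.2 (by linarith)
        field_simp
      rw [sum_congr rfl e1', sum_const, card_range, nsmul_eq_mul, mul_one]
    have e2 : ∑ i ∈ range N, (Real.sqrt (μ-(i:ℝ)-1))^2 = A := by
      refine sum_congr rfl (fun i hi => ?_)
      have := hbig i hi
      rw [Real.sq_sqrt (show (0:ℝ) ≤ μ-(i:ℝ)-1 by linarith)]
      ring
    have e3 : ∑ i ∈ range N, (1/Real.sqrt (μ-(i:ℝ)-1))^2 = H := by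
      refine sum_congr rfl (fun i hi => ?_)
      have := hbig i hi
      rw [div_pow, one_pow, Real.sq_sqrt (show (0:ℝ) ≤ μ-(i:ℝ)-1 by linarith)]
    rw [e1, e2, e3] at key
    exact key
  have hμ2 : (2:ℝ) ≤ μ := by rw [hμdef]; exact_mod_cast hm
  have hcoef : (0:ℝ) ≤ (μ-1)*(2*μ-1) := by nlinarith
  have hHge : (N:ℝ)^2 / A ≤ H := by
    rw [div_le_iff₀ hApos]
    nlinarith [hCS]
  have step : 6*A - (7*μ-5)*(N:ℝ) + (μ-1)*(2*μ-1)*((N:ℝ)^2/A)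
      ≤ 6*A - (7*μ-5)*(N:ℝ) + (μ-1)*(2*μ-1)*H := by
    have := mul_le_mul_of_nonneg_left hHge hcoef
    linarith
  refine le_trans ?_ step
  rw [div_eq_mul_inv]
  rw [← sub_nonneg]  -- we will show the expression is ≥ 0 directly instead
  rw [sub_zero]
  have hAne : A ≠ 0 := ne_of_gt hApos
  rw [show 6*A - (7*μ-5)*(N:ℝ) + (μ-1)*(2*μ-1)*((N:ℝ)^2*A⁻¹)
      = (6*A^2 - (7*μ-5)*(N:ℝ)*A + (μ-1)*(2*μ-1)*(N:ℝ)^2) / A by field_simp]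
  apply div_nonneg _ hApos.le
  have hNℝ : (1:ℝ) ≤ (N:ℝ) := by exact_mod_cast hN1
  have hpar : m = 2*N ∨ m = 2*N + 1 := by omega
  rcases hpar with hp | hp
  · have hμ : μ = 2*(N:ℝ) := by rw [hμdef, hp]; push_cast; ring
    rw [hμ] at hA ⊢
    rw [hA]
    nlinarith [sq_nonneg ((N:ℝ)-1), sq_nonneg (N:ℝ), mul_nonneg (mul_nonneg (mul_nonneg (by linarith : (0:ℝ) ≤ (N:ℝ)) (by linarith : (0:ℝ) ≤ (N:ℝ))) (by linarith : (0:ℝ) ≤ (N:ℝ))) (by linarith : (0:ℝ) ≤ (N:ℝ)-1)]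
  · have hμ : μ = 2*(N:ℝ)+1 := by rw [hμdef, hp]; push_cast; ring
    rw [hμ] at hA ⊢
    rw [hA]
    nlinarith [sq_nonneg ((N:ℝ)+1), sq_nonneg (N:ℝ), mul_nonneg (mul_nonneg (by linarith : (0:ℝ) ≤ (N:ℝ)) (by linarith : (0:ℝ) ≤ (N:ℝ))) (sq_nonneg ((N:ℝ)+1))]

lemma prefix_nonneg (m : ℕ) (hm : 2 ≤ m) (j : ℕ) (hj : j < m/2) :
    0 ≤ ∑ i ∈ range (j+1),
        ((m:ℝ)-1-2*(i:ℝ))*((m:ℝ)-3*(i:ℝ)-2)/((m:ℝ)-(i:ℝ)-1) := by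
  have hfacts : ∀ i : ℕ, i < m/2 → (0:ℝ) ≤ (m:ℝ)-1-2*(i:ℝ) ∧ (0:ℝ) < (m:ℝ)-(i:ℝ)-1 := by
    intro i hi
    have h1 : 2*i+2 ≤ m := by omega
    have h1' : 2*(i:ℝ)+2 ≤ (m:ℝ) := by exact_mod_cast h1
    have h2 : (i:ℝ) ≥ 0 := Nat.cast_nonneg i
    constructor <;> nlinarith
  by_cases hc : 3*j+2 ≤ m
  · apply sum_nonneg
    intro i hi
    rw [mem_range] at hi
    have hi' : i < m/2 := by omega
    obtain ⟨hf1, hf2⟩ := hfacts i hi'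
    have h3 : 3*i+2 ≤ m := by omega
    have h3' : 3*(i:ℝ)+2 ≤ (m:ℝ) := by exact_mod_cast h3
    apply div_nonneg _ hf2.le
    apply mul_nonneg hf1 (by linarith)
  · push_neg at hc
    have hjm : j+1 ≤ m/2 := hj
    have e : ∑ i ∈ range (m/2), ((m:ℝ)-1-2*(i:ℝ))*((m:ℝ)-3*(i:ℝ)-2)/((m:ℝ)-(i:ℝ)-1)
        = ∑ i ∈ range (j+1), ((m:ℝ)-1-2*(i:ℝ))*((m:ℝ)-3*(i:ℝ)-2)/((m:ℝ)-(i:ℝ)-1)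
          + ∑ i ∈ Ico (j+1) (m/2), ((m:ℝ)-1-2*(i:ℝ))*((m:ℝ)-3*(i:ℝ)-2)/((m:ℝ)-(i:ℝ)-1) := by
      rw [range_eq_Ico, range_eq_Ico]
      exact (Finset.sum_Ico_consecutive (fun i : ℕ => ((m:ℝ)-1-2*(i:ℝ))*((m:ℝ)-3*(i:ℝ)-2)/((m:ℝ)-(i:ℝ)-1)) (Nat.zero_le (j+1)) hjm).symm
    have hneg : ∑ i ∈ Ico (j+1) (m/2),
        ((m:ℝ)-1-2*(i:ℝ))*((m:ℝ)-3*(i:ℝ)-2)/((m:ℝ)-(i:ℝ)-1) ≤ 0 := by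
      apply sum_nonpos
      intro i hi
      rw [mem_Ico] at hi
      obtain ⟨hf1, hf2⟩ := hfacts i hi.2
      have h3 : m ≤ 3*i+2 := by omega
      have h3' : (m:ℝ) ≤ 3*(i:ℝ)+2 := by exact_mod_cast h3
      apply div_nonpos_of_nonpos_of_nonneg _ hf2.le
      apply mul_nonpos_of_nonneg_of_nonpos hf1 (by linarith)
    have hmn := main_numeric m hm
    rw [e] at hmn
    linarith

lemma sum_reflect_pair (G : ℕ → ℝ) (m : ℕ)
    (hsym : ∀ k, k < m → G (m-1-k) = G k)
    (hmid : ∀ k, m = 2*k+1 → G k = 0) :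
    ∑ k ∈ range m, G k = 2 * ∑ k ∈ range (m/2), G k := by
  have hsplit : ∑ k ∈ range m, G k
      = ∑ k ∈ range (m/2), G k + ∑ k ∈ Ico (m/2) m, G k := by
    rw [range_eq_Ico, range_eq_Ico]
    exact (Finset.sum_Ico_consecutive G (Nat.zero_le (m/2)) (Nat.div_le_self m 2)).symm
  rw [hsplit]
  have htail : ∑ k ∈ Ico (m/2) m, G k = ∑ j ∈ range (m - m/2), G (m/2 + j) :=
    Finset.sum_Ico_eq_sum_range _ _ _
  rcases Nat.even_or_odd m with ⟨N, hN⟩ | ⟨N, hN⟩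
  · have hm2 : m/2 = N := by omega
    have hmm : m - m/2 = N := by omega
    rw [htail, hmm, hm2]
    have hrefl : ∑ j ∈ range N, G (N + j) = ∑ j ∈ range N, G j := by
      rw [← Finset.sum_range_reflect (fun j => G (N + j)) N]
      refine Finset.sum_congr rfl (fun j hj => ?_)
      rw [mem_range] at hj
      rw [show N + (N - 1 - j) = m-1-j from by omega]
      exact hsym j (by omega)
    rw [hrefl]
    ring
  · have hm2 : m/2 = N := by omega
    have hmm : m - m/2 = N+1 := by omega
    rw [htail, hmm, hm2]
    have hstep : ∑ j ∈ range (N+1), G (N + j)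
        = ∑ j ∈ range N, G (N + (j+1)) + G N := by
      rw [Finset.sum_range_succ' (fun j => G (N + j)) N]
      simp
    have hrefl : ∑ j ∈ range N, G (N + (j+1)) = ∑ j ∈ range N, G j := by
      rw [← Finset.sum_range_reflect (fun j => G (N + (j+1))) N]
      refine Finset.sum_congr rfl (fun j hj => ?_)
      rw [mem_range] at hj
      rw [show N + (N - 1 - j + 1) = m-1-j from by omega]
      exact hsym j (by omega)
    rw [hstep, hrefl, hmid N hN]
    ring

lemma key (m : ℕ) (hm : 2 ≤ m) (b : ℕ → ℝ) (hb : ∀ n, 0 < b n)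
    (h1 : ∀ k : ℕ, (k:ℝ) * b k ≤ ((k:ℝ)+1) * b (k+1))
    (h2 : ∀ k : ℕ, ((k:ℝ)+1) * b (k+1) ≤ ((k:ℝ)+1/2) * b k) :
    0 ≤ ∑ k ∈ range (m+1),
        ((m:ℝ)*((m:ℝ)-1) - 6*(k:ℝ)*((m:ℝ)-(k:ℝ))) * (b k * b (m-k)) := by
  -- the basic product inequality
  have hP : ∀ k : ℕ, k + 1 ≤ m →
      ((k:ℝ)+1)*((m:ℝ)-(k:ℝ)-1)*(b (k+1) * b (m-(k+1)))
        ≤ ((k:ℝ)+1/2)*((m:ℝ)-(k:ℝ))*(b k * b (m-k)) := by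
    intro k hk
    have A1 : ((k:ℝ)+1) * b (k+1) ≤ ((k:ℝ)+1/2) * b k := h2 k
    have A2 : ((m:ℝ)-(k:ℝ)-1) * b (m-(k+1)) ≤ ((m:ℝ)-(k:ℝ)) * b (m-k) := by
      have h := h1 (m-(k+1))
      rw [show m-(k+1)+1 = m-k from by omega] at h
      rw [show ((m-(k+1):ℕ):ℝ) = (m:ℝ)-(k:ℝ)-1 from by
        rw [Nat.cast_sub hk]; push_cast; ring] at h
      calc ((m:ℝ)-(k:ℝ)-1) * b (m-(k+1)) ≤ (((m:ℝ)-(k:ℝ)-1)+1) * b (m-k) := h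
        _ = ((m:ℝ)-(k:ℝ)) * b (m-k) := by ring
    have hmk : (0:ℝ) ≤ (m:ℝ)-(k:ℝ)-1 := by
      have : ((k:ℝ)+1) ≤ (m:ℝ) := by exact_mod_cast hk
      linarith
    calc ((k:ℝ)+1)*((m:ℝ)-(k:ℝ)-1)*(b (k+1) * b (m-(k+1)))
        = (((k:ℝ)+1)*b (k+1)) * (((m:ℝ)-(k:ℝ)-1)*b (m-(k+1))) := by ring
      _ ≤ (((k:ℝ)+1/2)*b k) * (((m:ℝ)-(k:ℝ))*b (m-k)) := by
          exact mul_le_mul A1 A2 (mul_nonneg hmk (hb _).le)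
            (mul_nonneg (by positivity) (hb _).le)
      _ = ((k:ℝ)+1/2)*((m:ℝ)-(k:ℝ))*(b k * b (m-k)) := by ring
  -- Abel summation on the full sum
  rw [sum_abel (fun k => (m:ℝ)*((m:ℝ)-1) - 6*(k:ℝ)*((m:ℝ)-(k:ℝ)))
    (fun k => b k * b (m-k)) m]
  simp only [W_closed]
  simp only [sub_self, mul_zero, zero_mul, add_zero]
  -- pairing
  rw [sum_reflect_pair
    (fun k => ((k:ℝ)+1)*((m:ℝ)-(k:ℝ))*((m:ℝ)-1-2*(k:ℝ))
      * (b k * b (m-k) - b (k+1) * b (m-(k+1)))) m ?_ ?_]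
  rotate_left
  · -- symmetry
    intro k hk
    have ec : ((m-1-k:ℕ):ℝ) = (m:ℝ)-1-(k:ℝ) := by
      rw [Nat.cast_sub (show k ≤ m-1 from by omega), Nat.cast_sub (show 1 ≤ m from by omega)]
      push_cast; ring
    rw [ec, show m - (m-1-k) = k+1 from by omega,
      show m - (m-1-k+1) = k from by omega,
      show m-1-k+1 = m-k from by omega,
      show m-1-k = m-(k+1) from by omega]
    ring
  · -- middle term vanishes for odd m
    intro k hk
    rw [hk]
    push_cast
    ring
  -- now the reduced sum over `range (m/2)`
  have hψδ : 0 ≤ ∑ k ∈ range (m/2),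
      (((m:ℝ)-1-2*(k:ℝ))*((m:ℝ)-3*(k:ℝ)-2)/((m:ℝ)-(k:ℝ)-1))
        * (((m:ℝ)-(k:ℝ)) * (b k * b (m-k))) := by
    obtain ⟨K, hK⟩ : ∃ K, m/2 = K+1 := ⟨m/2-1, by omega⟩
    rw [hK, sum_abel (fun k => ((m:ℝ)-1-2*(k:ℝ))*((m:ℝ)-3*(k:ℝ)-2)/((m:ℝ)-(k:ℝ)-1))
      (fun k => ((m:ℝ)-(k:ℝ)) * (b k * b (m-k))) K]
    apply add_nonneg
    · apply sum_nonneg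
      intro k hk
      rw [mem_range] at hk
      apply mul_nonneg
      · exact prefix_nonneg m hm k (by omega)
      · -- δ k - δ (k+1) ≥ 0
        rw [sub_nonneg]
        have hk1 : k+1 ≤ m := by omega
        have hPk := hP k hk1
        have hc1 : ((k:ℝ)+1) ≤ (m:ℝ) := by exact_mod_cast hk1
        have hbb : 0 ≤ b k * b (m-k) := mul_nonneg (hb _).le (hb _).le
        have hbb' : 0 ≤ b (k+1) * b (m-(k+1)) := mul_nonneg (hb _).le (hb _).le
        push_cast
        nlinarith
    · apply mul_nonneg
      · exact prefix_nonneg m hm K (by omega)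
      · have hc1 : ((K:ℝ)+1) ≤ (m:ℝ) := by
          have : K+1 ≤ m := by omega
          exact_mod_cast this
        have hbb : 0 ≤ b K * b (m-K) := mul_nonneg (hb _).le (hb _).le
        nlinarith
  -- per-term comparison
  have hcomp : ∑ k ∈ range (m/2),
      (1/2) * ((((m:ℝ)-1-2*(k:ℝ))*((m:ℝ)-3*(k:ℝ)-2)/((m:ℝ)-(k:ℝ)-1))
        * (((m:ℝ)-(k:ℝ)) * (b k * b (m-k))))
      ≤ ∑ k ∈ range (m/2),
      ((k:ℝ)+1)*((m:ℝ)-(k:ℝ))*((m:ℝ)-1-2*(k:ℝ))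
        * (b k * b (m-k) - b (k+1) * b (m-(k+1))) := by
    apply sum_le_sum
    intro k hk
    rw [mem_range] at hk
    have hk2 : 2*k+2 ≤ m := by omega
    have hk2' : 2*(k:ℝ)+2 ≤ (m:ℝ) := by exact_mod_cast hk2
    have hkc : (0:ℝ) ≤ (k:ℝ) := Nat.cast_nonneg k
    have hne : (m:ℝ)-(k:ℝ)-1 ≠ 0 := by nlinarith
    have hPk := hP k (by omega)
    rw [← sub_nonneg]
    have hident : ((k:ℝ)+1)*((m:ℝ)-(k:ℝ))*((m:ℝ)-1-2*(k:ℝ))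
        * (b k * b (m-k) - b (k+1) * b (m-(k+1)))
      - (1/2) * ((((m:ℝ)-1-2*(k:ℝ))*((m:ℝ)-3*(k:ℝ)-2)/((m:ℝ)-(k:ℝ)-1))
        * (((m:ℝ)-(k:ℝ)) * (b k * b (m-k))))
      = (((m:ℝ)-(k:ℝ))*((m:ℝ)-1-2*(k:ℝ))/((m:ℝ)-(k:ℝ)-1))
        * (((k:ℝ)+1/2)*((m:ℝ)-(k:ℝ))*(b k * b (m-k))
            - ((k:ℝ)+1)*((m:ℝ)-(k:ℝ)-1)*(b (k+1) * b (m-(k+1)))) := by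
      field_simp
      ring
    rw [hident]
    apply mul_nonneg
    · apply div_nonneg
      · apply mul_nonneg <;> nlinarith
      · nlinarith
    · linarith
  calc (0:ℝ) ≤ 2 * ((1/2) * ∑ k ∈ range (m/2),
      (((m:ℝ)-1-2*(k:ℝ))*((m:ℝ)-3*(k:ℝ)-2)/((m:ℝ)-(k:ℝ)-1))
        * (((m:ℝ)-(k:ℝ)) * (b k * b (m-k)))) := by linarith
    _ = 2 * ∑ k ∈ range (m/2),
      (1/2) * ((((m:ℝ)-1-2*(k:ℝ))*((m:ℝ)-3*(k:ℝ)-2)/((m:ℝ)-(k:ℝ)-1))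
        * (((m:ℝ)-(k:ℝ)) * (b k * b (m-k)))) := by rw [mul_sum]
    _ ≤ 2 * ∑ k ∈ range (m/2),
      ((k:ℝ)+1)*((m:ℝ)-(k:ℝ))*((m:ℝ)-1-2*(k:ℝ))
        * (b k * b (m-k) - b (k+1) * b (m-(k+1))) := by linarith

lemma summable_shift {R : ℝ} (hR : 0 < R) {c : ℕ → ℝ} (hc : ∀ n, 0 ≤ c n)
    (hsum : ∀ r : ℝ, 0 < r → r < R → Summable fun n => c n * r ^ n)
    {x : ℝ} (hx : |x| < R) :
    Summable (fun n => c n * x ^ n)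
      ∧ Summable (fun n : ℕ => ((n:ℝ)+1) * c (n+1) * x ^ n) := by
  set r : ℝ := (|x| + R)/2 with hrdef
  have hxa : 0 ≤ |x| := abs_nonneg x
  have hr0 : 0 < r := by rw [hrdef]; linarith
  have hrR : r < R := by rw [hrdef]; linarith
  have hxr : |x| < r := by rw [hrdef]; linarith
  have hs := hsum r hr0 hrR
  have hterm : ∀ n, c n * r ^ n ≤ ∑' k, c k * r ^ k := by
    intro n
    exact Summable.le_tsum hs n (fun j _ => mul_nonneg (hc j) (pow_nonneg hr0.le j))
  set S : ℝ := ∑' k, c k * r ^ k with hSdef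
  constructor
  · refine Summable.of_norm_bounded hs (fun n => ?_)
    rw [Real.norm_eq_abs, abs_mul, abs_of_nonneg (hc n), abs_pow]
    calc c n * |x| ^ n ≤ c n * r ^ n :=
          mul_le_mul_of_nonneg_left (pow_le_pow_left₀ hxa hxr.le n) (hc n)
      _ = c n * r ^ n := rfl
  · set q : ℝ := |x| / r with hqdef
    have hq0 : 0 ≤ q := by positivity
    have hq1 : q < 1 := by rw [hqdef, div_lt_one hr0]; exact hxr
    have hu : Summable (fun n : ℕ => (S/r) * (((n:ℝ)+1) * q ^ n)) := by
      apply Summable.mul_left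
      have h1 : Summable (fun n : ℕ => (n:ℝ) ^ 1 * q ^ n) :=
        summable_pow_mul_geometric_of_norm_lt_one 1
          (by rwa [Real.norm_eq_abs, abs_of_nonneg hq0])
      have h2 : Summable (fun n : ℕ => q ^ n) := summable_geometric_of_lt_one hq0 hq1
      have := h1.add h2
      refine this.congr (fun n => ?_)
      push_cast
      ring
    refine Summable.of_norm_bounded hu (fun n => ?_)
    rw [Real.norm_eq_abs, abs_mul, abs_mul, abs_pow,
      abs_of_nonneg (hc (n+1)), abs_of_nonneg (show (0:ℝ) ≤ (n:ℝ)+1 by positivity)]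
    have hcb : c (n+1) ≤ S / r ^ (n+1) := by
      rw [le_div_iff₀ (pow_pos hr0 _)]
      exact hterm (n+1)
    have e : (S/r) * (((n:ℝ)+1) * q ^ n) = ((n:ℝ)+1) * ((S / r^(n+1)) * |x| ^ n) := by
      rw [hqdef, div_pow]
      field_simp
      ring
    rw [e]
    calc ((n:ℝ)+1) * c (n+1) * |x| ^ n = ((n:ℝ)+1) * (c (n+1) * |x| ^ n) := by ring
      _ ≤ ((n:ℝ)+1) * ((S / r^(n+1)) * |x| ^ n) :=
          mul_le_mul_of_nonneg_left
            (mul_le_mul_of_nonneg_right hcb (pow_nonneg hxa n)) (by positivity)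

lemma hasDerivAt_psum {R : ℝ} (hR : 0 < R) {c : ℕ → ℝ} (hc : ∀ n, 0 ≤ c n)
    (hsum : ∀ r : ℝ, 0 < r → r < R → Summable fun n => c n * r ^ n)
    {x : ℝ} (hx : |x| < R) :
    HasDerivAt (fun y : ℝ => ∑' n, c n * y ^ n)
      (∑' n : ℕ, ((n:ℝ)+1) * c (n+1) * x ^ n) x := by
  set r : ℝ := (|x| + R)/2 with hrdef
  have hxa : 0 ≤ |x| := abs_nonneg x
  have hr0 : 0 < r := by rw [hrdef]; linarith
  have hrR : r < R := by rw [hrdef]; linarith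
  have hxr : |x| < r := by rw [hrdef]; linarith
  have hrabs : |r| < R := by rwa [abs_of_pos hr0]
  -- summable bound u n = n * c n * r^(n-1)
  have hu : Summable (fun n : ℕ => (n:ℝ) * c n * r ^ (n-1)) := by
    rw [← summable_nat_add_iff 1]
    refine ((summable_shift hR hc hsum hrabs).2).congr (fun n => ?_)
    push_cast
    norm_num
  have hD := hasDerivAt_tsum_of_isPreconnected hu (isOpen_Ioo (a := -r) (b := r))
    ((convex_Ioo _ _).isPreconnected)
    (g := fun n y => c n * y ^ n) (g' := fun n y => c n * ((n:ℝ) * y ^ (n-1)))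
    (fun n y _ => (hasDerivAt_pow n y).const_mul (c n))
    ?_ (Set.mem_Ioo.2 ⟨by linarith, hr0⟩) ?_ (Set.mem_Ioo.2 (abs_lt.1 hxr))
  · have hsx : Summable (fun n : ℕ => c n * ((n:ℝ) * x ^ (n-1))) := by
      rw [← summable_nat_add_iff 1]
      refine ((summable_shift hR hc hsum hx).2).congr (fun n => ?_)
      push_cast
      norm_num
      ring
    have e : (∑' n, c n * ((n:ℝ) * x ^ (n-1))) = ∑' n : ℕ, ((n:ℝ)+1) * c (n+1) * x ^ n := by
      rw [Summable.tsum_eq_zero_add hsx]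
      norm_num
      refine tsum_congr (fun n => ?_)
      push_cast
      norm_num
      ring
    rwa [e] at hD
  · intro n y hy
    rw [Set.mem_Ioo] at hy
    have hya : |y| ≤ r := by rw [abs_le]; constructor <;> linarith [hy.1, hy.2]
    rw [Real.norm_eq_abs, abs_mul, abs_mul, abs_pow, abs_of_nonneg (hc n),
      Nat.abs_cast]
    have hpow : |y| ^ (n-1) ≤ r ^ (n-1) := pow_le_pow_left₀ (abs_nonneg y) hya _
    calc c n * ((n:ℝ) * |y| ^ (n-1)) = ((n:ℝ) * c n) * |y| ^ (n-1) := by ring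
      _ ≤ ((n:ℝ) * c n) * r ^ (n-1) :=
          mul_le_mul_of_nonneg_left hpow (mul_nonneg (Nat.cast_nonneg n) (hc n))
      _ = (n:ℝ) * c n * r ^ (n-1) := by ring
  · -- summable at 0
    refine (summable_shift hR hc hsum (by rwa [abs_zero])).1

def Tsum (a : ℕ → ℝ) (m : ℕ) : ℝ :=
  ∑ k ∈ range (m+1), ((m:ℝ)*((m:ℝ)-1) - 6*(k:ℝ)*((m:ℝ)-(k:ℝ))) * (a k * a (m-k))

lemma finid (a : ℕ → ℝ) (n : ℕ) :
    (∑ k ∈ range (n+1), ((((n-k:ℕ)):ℝ)+2) * ((((n-k:ℕ)):ℝ)+1) * (a k * a ((n-k)+2)))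
      - 2 * ∑ k ∈ range (n+1), ((k:ℝ)+1) * ((((n-k:ℕ)):ℝ)+1) * (a (k+1) * a ((n-k)+1))
    = Tsum a (n+2) / 2 := by
  have hA1 : (∑ k ∈ range (n+1), ((((n-k:ℕ)):ℝ)+2) * ((((n-k:ℕ)):ℝ)+1) * (a k * a ((n-k)+2)))
      = ∑ k ∈ range (n+3), (((n:ℝ)+2-(k:ℝ)) * ((n:ℝ)+1-(k:ℝ))) * (a k * a ((n+2)-k)) := by
    symm
    rw [show n+3 = (n+2)+1 from rfl, sum_range_succ, sum_range_succ]
    have z1 : ((n:ℝ)+2-((n+2:ℕ):ℝ)) * ((n:ℝ)+1-((n+2:ℕ):ℝ)) * (a (n+2) * a ((n+2)-(n+2))) = 0 := by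
      push_cast; ring
    have z2 : ((n:ℝ)+2-((n+1:ℕ):ℝ)) * ((n:ℝ)+1-((n+1:ℕ):ℝ)) * (a (n+1) * a ((n+2)-(n+1))) = 0 := by
      push_cast; ring
    rw [z1, z2, add_zero, add_zero]
    refine sum_congr rfl fun k hk => ?_
    rw [mem_range] at hk
    have hk' : k ≤ n := by omega
    rw [show (n+2)-k = (n-k)+2 from by omega, Nat.cast_sub hk']
    ring
  have hA2 : (∑ k ∈ range (n+1), ((k:ℝ)+1) * ((((n-k:ℕ)):ℝ)+1) * (a (k+1) * a ((n-k)+1)))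
      = ∑ k ∈ range (n+3), ((k:ℝ) * ((n:ℝ)+2-(k:ℝ))) * (a k * a ((n+2)-k)) := by
    symm
    rw [show n+3 = (n+2)+1 from rfl,
      sum_range_succ' (fun k => ((k:ℝ) * ((n:ℝ)+2-(k:ℝ))) * (a k * a ((n+2)-k))) (n+2),
      show n+2 = (n+1)+1 from rfl,
      sum_range_succ (fun i => (((i+1:ℕ):ℝ) * ((n:ℝ)+2-((i+1:ℕ):ℝ))) * (a (i+1) * a ((n+2)-(i+1)))) (n+1)]
    have z1 : (((0:ℕ)):ℝ) * ((n:ℝ)+2-((0:ℕ):ℝ)) * (a 0 * a ((n+2)-0)) = 0 := by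
      push_cast; ring
    have z2 : (((n+1+1:ℕ)):ℝ) * ((n:ℝ)+2-((n+1+1:ℕ):ℝ)) * (a (n+1+1) * a ((n+2)-(n+1+1))) = 0 := by
      push_cast; ring
    rw [z1, z2, add_zero, add_zero]
    refine sum_congr rfl fun k hk => ?_
    rw [mem_range] at hk
    have hk' : k ≤ n := by omega
    rw [show (n+2)-(k+1) = (n-k)+1 from by omega, Nat.cast_sub hk']
    push_cast
    ring
  have hA1' : (∑ k ∈ range (n+3), (((n:ℝ)+2-(k:ℝ)) * ((n:ℝ)+1-(k:ℝ))) * (a k * a ((n+2)-k)))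
      = ∑ k ∈ range (n+3), ((k:ℝ) * ((k:ℝ)-1)) * (a k * a ((n+2)-k)) := by
    rw [← sum_range_reflect
      (fun k => (((n:ℝ)+2-(k:ℝ)) * ((n:ℝ)+1-(k:ℝ))) * (a k * a ((n+2)-k))) (n+3)]
    refine sum_congr rfl fun j hj => ?_
    rw [mem_range] at hj
    have hj' : j ≤ n+2 := by omega
    rw [show n+3-1-j = (n+2)-j from by omega, show (n+2)-((n+2)-j) = j from by omega,
      Nat.cast_sub hj']
    push_cast
    ring
  have hT : Tsum a (n+2)
      = (∑ k ∈ range (n+3), (((n:ℝ)+2-(k:ℝ)) * ((n:ℝ)+1-(k:ℝ))) * (a k * a ((n+2)-k)))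
        + (∑ k ∈ range (n+3), ((k:ℝ) * ((k:ℝ)-1)) * (a k * a ((n+2)-k)))
        - 4 * ∑ k ∈ range (n+3), ((k:ℝ) * ((n:ℝ)+2-(k:ℝ))) * (a k * a ((n+2)-k)) := by
    rw [Tsum, show n+2+1 = n+3 from rfl, ← sum_add_distrib, mul_sum, ← sum_sub_distrib]
    refine sum_congr rfl fun k hk => ?_
    push_cast
    ring
  rw [hA1, hA2]
  rw [hA1'] at hT ⊢
  linarith [hT]

lemma Tsum_def (a : ℕ → ℝ) (m : ℕ) : Tsum a m =
    ∑ k ∈ range (m+1), ((m:ℝ)*((m:ℝ)-1) - 6*(k:ℝ)*((m:ℝ)-(k:ℝ))) * (a k * a (m-k)) := rfl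

theorem stmt9 (R : ℝ) (hR : 0 < R) (a : ℕ → ℝ) (ha : ∀ n, 0 < a n) (f : ℝ → ℝ)
    (hf : ∀ x ∈ Set.Ioo (-R) R, HasSum (fun n => a n * x ^ n) (f x))
    (hmono : Monotone fun n : ℕ => (n : ℝ) * a n * R ^ n)
    (hanti : Antitone fun n : ℕ => (n.factorial : ℝ) * a n * R ^ n / ascFac (1/2) n) :
    ConcaveOn ℝ (Set.Ioo 0 R) (fun x => 1 / f x) ∧
      ∀ x ∈ Set.Ioo 0 R, ∀ y ∈ Set.Ioo 0 R,
        f ((x + y) / 2) ≤ 2 * f x * f y / (f x + f y) ∧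
          (f ((x + y) / 2) = 2 * f x * f y / (f x + f y) ↔ x = y) := by
  have ha' : ∀ n, 0 ≤ a n := fun n => (ha n).le
  -- ascFac positivity
  have hasc : ∀ n, 0 < ascFac (1/2) n := by
    intro n
    induction n with
    | zero => norm_num [ascFac]
    | succ n ih =>
      rw [show ascFac (1/2) (n+1) = ascFac (1/2) n * (1/2 + n) from rfl]
      have : (0:ℝ) < 1/2 + n := by positivity
      exact mul_pos ih this
  -- scaled coefficient inequalities
  have h1 : ∀ k : ℕ, (k:ℝ) * (a k * R^k) ≤ ((k:ℝ)+1) * (a (k+1) * R^(k+1)) := by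
    intro k
    have hmo := hmono (Nat.le_succ k)
    dsimp only at hmo
    push_cast at hmo
    calc (k:ℝ) * (a k * R^k) = (k:ℝ) * a k * R ^ k := by ring
      _ ≤ ((k:ℝ)+1) * a (k+1) * R^(k+1) := hmo
      _ = ((k:ℝ)+1) * (a (k+1) * R^(k+1)) := by ring
  have h2 : ∀ k : ℕ, ((k:ℝ)+1) * (a (k+1) * R^(k+1)) ≤ ((k:ℝ)+1/2) * (a k * R^k) := by
    intro k
    have han := hanti (Nat.le_succ k)
    dsimp only at han
    rw [show ascFac (1/2) (k+1) = ascFac (1/2) k * (1/2 + k) from rfl] at han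
    rw [div_le_div_iff₀ (mul_pos (hasc k) (by positivity)) (hasc k)] at han
    have hfac : (((k+1).factorial : ℕ) : ℝ) = ((k:ℝ)+1) * (k.factorial : ℝ) := by
      rw [Nat.factorial_succ]; push_cast; ring
    have hkA : (0:ℝ) < (k.factorial : ℝ) * ascFac (1/2) k := by
      apply mul_pos _ (hasc k)
      exact_mod_cast Nat.factorial_pos k
    apply le_of_mul_le_mul_right _ hkA
    calc ((k:ℝ)+1) * (a (k+1) * R^(k+1)) * ((k.factorial:ℝ) * ascFac (1/2) k)
        = (((k+1).factorial : ℕ):ℝ) * a (k+1) * R^(k+1) * ascFac (1/2) k := by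
          rw [hfac]; push_cast; ring
      _ ≤ (k.factorial:ℝ) * a k * R^k * (ascFac (1/2) k * (1/2 + (k:ℝ))) := han
      _ = ((k:ℝ)+1/2) * (a k * R^k) * ((k.factorial:ℝ) * ascFac (1/2) k) := by ring
  have hbpos : ∀ n, 0 < a n * R^n := fun n => mul_pos (ha n) (pow_pos hR n)
  -- nonnegativity of the symmetric sums
  have hTa : ∀ m:ℕ, 2 ≤ m → 0 ≤ Tsum a m := by
    intro m hm
    have hkey := key m hm (fun n => a n * R^n) hbpos h1 h2
    have he : ∑ k ∈ range (m+1),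
        ((m:ℝ)*((m:ℝ)-1) - 6*(k:ℝ)*((m:ℝ)-(k:ℝ))) * (a k * R^k * (a (m-k) * R^(m-k)))
        = Tsum a m * R^m := by
      rw [Tsum_def, sum_mul]
      refine sum_congr rfl fun k hk => ?_
      rw [mem_range] at hk
      have hk' : k ≤ m := by omega
      calc ((m:ℝ)*((m:ℝ)-1) - 6*(k:ℝ)*((m:ℝ)-(k:ℝ))) * (a k * R^k * (a (m-k) * R^(m-k)))
          = ((m:ℝ)*((m:ℝ)-1) - 6*(k:ℝ)*((m:ℝ)-(k:ℝ))) * (a k * a (m-k)) * (R^k * R^(m-k)) := by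
            ring
        _ = ((m:ℝ)*((m:ℝ)-1) - 6*(k:ℝ)*((m:ℝ)-(k:ℝ))) * (a k * a (m-k)) * R^m := by
            rw [← pow_add, show k + (m-k) = m from by omega]
    rw [he] at hkey
    nlinarith [pow_pos hR m]
  have hTa3 : 0 < Tsum a 3 := by
    have hA : a 1 * R ≤ a 0 / 2 := by
      have := h2 0
      norm_num at this
      linarith
    have hB : 2*(a 2*R^2) ≤ 3*(a 3*R^3) := by
      have := h1 2
      norm_num at this
      linarith
    have hmul : (a 1 * R) * (2*(a 2*R^2)) ≤ (a 0 / 2) * (3*(a 3*R^3)) := by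
      apply mul_le_mul hA hB (by nlinarith [hbpos 2]) (by nlinarith [ha 0])
    rw [Tsum_def]
    norm_num [Finset.sum_range_succ]
    nlinarith [mul_pos (ha 0) (ha 3), mul_pos (ha 1) (ha 2), pow_pos hR 3,
      mul_pos (mul_pos (ha 0) (ha 3)) (pow_pos hR 3)]
  -- base summability
  have hsum_a : ∀ r:ℝ, 0 < r → r < R → Summable fun n => a n * r ^ n := by
    intro r hr0 hrR
    exact (hf r ⟨by linarith, hrR⟩).summable
  -- the sequence c1
  set c1 : ℕ → ℝ := fun n => ((n:ℝ)+1) * a (n+1) with hc1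
  have hc1nn : ∀ n, 0 ≤ c1 n := by
    intro n
    simp only [hc1]
    exact mul_nonneg (by positivity) (ha' _)
  have hsum_c1 : ∀ r:ℝ, 0 < r → r < R → Summable fun n => c1 n * r^n := by
    intro r h0 h1'
    have := (summable_shift hR ha' hsum_a (x := r) (by rwa [abs_of_pos h0])).2
    refine this.congr fun n => ?_
    simp only [hc1]
  have hmemIoo : ∀ y ∈ Set.Ioo (0:ℝ) R, |y| < R := fun y hy => by
    rw [abs_of_pos hy.1]; exact hy.2
  -- positivity of F
  have hFpos : ∀ y ∈ Set.Ioo (0:ℝ) R, 0 < ∑' n, a n * y^n := by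
    intro y hy
    have hs := (summable_shift hR ha' hsum_a (hmemIoo y hy)).1
    calc (0:ℝ) < a 0 := ha 0
      _ = a 0 * y^0 := by norm_num
      _ ≤ ∑' n, a n * y^n :=
          Summable.le_tsum hs 0 (fun j _ => mul_nonneg (ha' j) (pow_nonneg hy.1.le j))
  -- f agrees with the power series
  have hfF : ∀ y ∈ Set.Ioo (-R) R, f y = ∑' n, a n * y^n := by
    intro y hy
    exact ((hf y hy).tsum_eq).symm
  -- derivatives
  have hFd : ∀ y ∈ Set.Ioo (0:ℝ) R,
      HasDerivAt (fun z : ℝ => ∑' n, a n * z^n) (∑' n : ℕ, c1 n * y^n) y := by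
    intro y hy
    have h := hasDerivAt_psum hR ha' hsum_a (hmemIoo y hy)
    have e : (∑' n : ℕ, ((n:ℝ)+1) * a (n+1) * y ^ n) = ∑' n : ℕ, c1 n * y^n :=
      tsum_congr fun n => by simp only [hc1]
    rwa [e] at h
  have hF1d : ∀ y ∈ Set.Ioo (0:ℝ) R,
      HasDerivAt (fun z : ℝ => ∑' n, c1 n * z^n)
        (∑' n : ℕ, ((n:ℝ)+1) * c1 (n+1) * y^n) y := by
    intro y hy
    exact hasDerivAt_psum hR hc1nn hsum_c1 (hmemIoo y hy)
  -- the core inequality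
  have hcore : ∀ x ∈ Set.Ioo (0:ℝ) R,
      0 < (∑' n, a n * x^n) * (∑' n : ℕ, ((n:ℝ)+1) * c1 (n+1) * x^n)
            - 2 * ((∑' n : ℕ, c1 n * x^n) * (∑' n : ℕ, c1 n * x^n)) := by
    intro x hx
    have hxa := hmemIoo x hx
    have hx0 : 0 < x := hx.1
    have hs0 : Summable (fun n => a n * x^n) := (summable_shift hR ha' hsum_a hxa).1
    have hs1 : Summable (fun n : ℕ => c1 n * x^n) := by
      refine ((summable_shift hR ha' hsum_a hxa).2).congr fun n => ?_
      simp only [hc1]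
    have hs2 : Summable (fun n : ℕ => ((n:ℝ)+1) * c1 (n+1) * x^n) :=
      (summable_shift hR hc1nn hsum_c1 hxa).2
    have hn0 : Summable (fun n => ‖a n * x^n‖) :=
      hs0.congr fun n => (Real.norm_of_nonneg (mul_nonneg (ha' n) (pow_nonneg hx0.le n))).symm
    have hn1 : Summable (fun n : ℕ => ‖c1 n * x^n‖) :=
      hs1.congr fun n => (Real.norm_of_nonneg
        (mul_nonneg (hc1nn n) (pow_nonneg hx0.le n))).symm
    have hn2 : Summable (fun n : ℕ => ‖((n:ℝ)+1) * c1 (n+1) * x^n‖) :=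
      hs2.congr fun n => (Real.norm_of_nonneg
        (mul_nonneg (mul_nonneg (by positivity) (hc1nn (n+1))) (pow_nonneg hx0.le n))).symm
    have hcp1 : (∑' n, a n * x^n) * (∑' n : ℕ, ((n:ℝ)+1) * c1 (n+1) * x^n)
        = ∑' n : ℕ, ∑ k ∈ range (n+1),
            (a k * x^k) * ((((n-k:ℕ):ℝ)+1) * c1 ((n-k)+1) * x^(n-k)) :=
      tsum_mul_tsum_eq_tsum_sum_range_of_summable_norm hn0 hn2
    have hcp2 : (∑' n : ℕ, c1 n * x^n) * (∑' n : ℕ, c1 n * x^n)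
        = ∑' n : ℕ, ∑ k ∈ range (n+1), (c1 k * x^k) * (c1 (n-k) * x^(n-k)) :=
      tsum_mul_tsum_eq_tsum_sum_range_of_summable_norm hn1 hn1
    have hterm1 : ∀ n : ℕ, (∑ k ∈ range (n+1),
        (a k * x^k) * ((((n-k:ℕ):ℝ)+1) * c1 ((n-k)+1) * x^(n-k)))
        = (∑ k ∈ range (n+1), ((((n-k:ℕ)):ℝ)+2) * ((((n-k:ℕ)):ℝ)+1) * (a k * a ((n-k)+2))) * x^n := by
      intro n
      rw [sum_mul]
      refine sum_congr rfl fun k hk => ?_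
      rw [mem_range] at hk
      have hkn : k + (n-k) = n := by omega
      calc (a k * x^k) * ((((n-k:ℕ):ℝ)+1) * c1 ((n-k)+1) * x^(n-k))
          = ((((n-k:ℕ)):ℝ)+2) * ((((n-k:ℕ)):ℝ)+1) * (a k * a ((n-k)+2)) * (x^k * x^(n-k)) := by
            simp only [hc1]
            push_cast
            ring
        _ = ((((n-k:ℕ)):ℝ)+2) * ((((n-k:ℕ)):ℝ)+1) * (a k * a ((n-k)+2)) * x^n := by
            rw [← pow_add, hkn]
    have hterm2 : ∀ n : ℕ, (∑ k ∈ range (n+1), (c1 k * x^k) * (c1 (n-k) * x^(n-k)))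
        = (∑ k ∈ range (n+1), ((k:ℝ)+1) * ((((n-k:ℕ)):ℝ)+1) * (a (k+1) * a ((n-k)+1))) * x^n := by
      intro n
      rw [sum_mul]
      refine sum_congr rfl fun k hk => ?_
      rw [mem_range] at hk
      have hkn : k + (n-k) = n := by omega
      calc (c1 k * x^k) * (c1 (n-k) * x^(n-k))
          = ((k:ℝ)+1) * ((((n-k:ℕ)):ℝ)+1) * (a (k+1) * a ((n-k)+1)) * (x^k * x^(n-k)) := by
            simp only [hc1]
            ring
        _ = ((k:ℝ)+1) * ((((n-k:ℕ)):ℝ)+1) * (a (k+1) * a ((n-k)+1)) * x^n := by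
            rw [← pow_add, hkn]
    have hE : ∀ n : ℕ, (∑ k ∈ range (n+1),
          (a k * x^k) * ((((n-k:ℕ):ℝ)+1) * c1 ((n-k)+1) * x^(n-k)))
        - 2 * (∑ k ∈ range (n+1), (c1 k * x^k) * (c1 (n-k) * x^(n-k)))
        = (Tsum a (n+2) / 2) * x^n := by
      intro n
      rw [hterm1 n, hterm2 n]
      linear_combination x^n * finid a n
    have hsCP1 : Summable (fun n : ℕ => ∑ k ∈ range (n+1),
        (a k * x^k) * ((((n-k:ℕ):ℝ)+1) * c1 ((n-k)+1) * x^(n-k))) :=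
      (summable_norm_sum_mul_range_of_summable_norm hn0 hn2).of_norm
    have hsCP2 : Summable (fun n : ℕ => ∑ k ∈ range (n+1),
        (c1 k * x^k) * (c1 (n-k) * x^(n-k))) :=
      (summable_norm_sum_mul_range_of_summable_norm hn1 hn1).of_norm
    have hdiff : (∑' n, a n * x^n) * (∑' n : ℕ, ((n:ℝ)+1) * c1 (n+1) * x^n)
        - 2 * ((∑' n : ℕ, c1 n * x^n) * (∑' n : ℕ, c1 n * x^n))
        = ∑' n : ℕ, (Tsum a (n+2) / 2) * x^n := by
      rw [hcp1, hcp2, ← tsum_mul_left, ← Summable.tsum_sub hsCP1 (hsCP2.mul_left 2)]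
      exact tsum_congr hE
    rw [hdiff]
    have hsE : Summable (fun n : ℕ => (Tsum a (n+2) / 2) * x^n) :=
      ((hsCP1.sub (hsCP2.mul_left 2)).congr hE)
    have hEnn : ∀ j : ℕ, j ≠ 1 → 0 ≤ (Tsum a (j+2) / 2) * x^j := by
      intro j _
      have := hTa (j+2) (by omega)
      positivity
    calc (0:ℝ) < (Tsum a (1+2) / 2) * x^1 := by
          have := hTa3
          positivity
      _ ≤ ∑' n : ℕ, (Tsum a (n+2) / 2) * x^n := Summable.le_tsum hsE 1 hEnn
  -- first derivative of 1/f on (0,R)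
  have hphi : ∀ y ∈ Set.Ioo (0:ℝ) R,
      HasDerivAt (fun z => 1/f z)
        (-(∑' n : ℕ, c1 n * y^n) / ((∑' n, a n * y^n))^2) y := by
    intro y hy
    have hne := (hFpos y hy).ne'
    have hdiv := (hasDerivAt_const y (1:ℝ)).div (hFd y hy) hne
    have hval : (0 * (∑' n, a n * y^n) - 1 * (∑' n : ℕ, c1 n * y^n))
          / ((∑' n, a n * y^n))^2
        = -(∑' n : ℕ, c1 n * y^n) / ((∑' n, a n * y^n))^2 := by ring
    rw [hval] at hdiv
    apply hdiv.congr_of_eventuallyEq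
    have hyIoo : y ∈ Set.Ioo (-R) R := ⟨by linarith [hy.1], hy.2⟩
    filter_upwards [isOpen_Ioo.mem_nhds hyIoo] with z hz
    rw [hfF z hz]
    rfl
  -- strict concavity
  have hSC : StrictConcaveOn ℝ (Set.Ioo (0:ℝ) R) (fun x => 1/f x) := by
    apply strictConcaveOn_of_deriv2_neg (convex_Ioo 0 R)
    · intro y hy
      exact (hphi y hy).continuousAt.continuousWithinAt
    · intro y hy
      rw [interior_Ioo] at hy
      show deriv (deriv (fun z => 1/f z)) y < 0
      have hne := (hFpos y hy).ne'
      have hG1d := ((hF1d y hy).neg).div ((hFd y hy).pow 2) (pow_ne_zero 2 hne)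
      have heq : deriv (fun z => 1/f z)
          =ᶠ[nhds y] (fun z => -(∑' n : ℕ, c1 n * z^n) / ((∑' n, a n * z^n))^2) := by
        filter_upwards [isOpen_Ioo.mem_nhds hy] with z hz
        exact (hphi z hz).deriv
      rw [heq.deriv_eq, show (fun z => -(∑' n : ℕ, c1 n * z^n) / ((∑' n, a n * z^n))^2) = ((-fun z => ∑' n : ℕ, c1 n * z^n) / (fun z => ∑' n, a n * z^n)^2) from rfl, hG1d.deriv]
      simp only [Pi.pow_apply, Pi.neg_apply]
      have hFp := hFpos y hy
      have hc := hcore y hy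
      have hnum : (-(∑' n : ℕ, ((n:ℝ)+1) * c1 (n+1) * y^n) * ((∑' n, a n * y^n))^2
          - (-(∑' n : ℕ, c1 n * y^n)) * ((2:ℕ) * ((∑' n, a n * y^n))^(2-1) * (∑' n : ℕ, c1 n * y^n))) < 0 := by
        push_cast
        norm_num
        nlinarith [hFp, hc, mul_pos hFp hc]
      apply div_neg_of_neg_of_pos hnum
      positivity
  refine ⟨hSC.concaveOn, ?_⟩
  intro x hx y hy
  have hfx : 0 < f x := by rw [hfF x ⟨by linarith [hx.1], hx.2⟩]; exact hFpos x hx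
  have hfy : 0 < f y := by rw [hfF y ⟨by linarith [hy.1], hy.2⟩]; exact hFpos y hy
  have hmidmem : (x+y)/2 ∈ Set.Ioo (0:ℝ) R := by
    constructor
    · have := hx.1; have := hy.1; linarith
    · have := hx.2; have := hy.2; linarith
  have hfs : 0 < f ((x+y)/2) := by
    rw [hfF _ ⟨by linarith [hmidmem.1], hmidmem.2⟩]
    exact hFpos _ hmidmem
  by_cases hxy : x = y
  · subst hxy
    have hmid : (x+x)/2 = x := by ring
    rw [hmid]
    have hrhs : 2 * f x * f x / (f x + f x) = f x := by
      rw [div_eq_iff (by linarith)]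
      ring
    rw [hrhs]
    exact ⟨le_refl _, by simp⟩
  · have hstrict := hSC.2 hx hy hxy (show (0:ℝ) < 1/2 by norm_num) (show (0:ℝ) < 1/2 by norm_num) (by norm_num)
    simp only [smul_eq_mul] at hstrict
    have hpt : (1/2) * x + (1/2) * y = (x+y)/2 := by ring
    rw [hpt] at hstrict
    -- hstrict : 1/2 * (1/f x) + 1/2 * (1/f y) < 1/f ((x+y)/2)
    have he : (1/2) * (1/f x) + (1/2) * (1/f y) = (f x + f y)/(2 * f x * f y) := by
      field_simp
      ring
    rw [he] at hstrict
    have hlt : f ((x+y)/2) < 2 * f x * f y / (f x + f y) := by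
      have h1' := (div_lt_div_iff₀ (by positivity) (by positivity)).1 hstrict
      rw [lt_div_iff₀ (by positivity)]
      nlinarith [h1']
    exact ⟨hlt.le, ⟨fun h => absurd h (ne_of_lt hlt), fun h => absurd h hxy⟩⟩
end

section
/- Let F(x) = ₂F₁(a,b;c;x) with a,b,c > 0. If ab/(a+b+1) < c, then log F is convex on (0,1); in particular F((x+y)/2) ≤ √(F(x)F(y)) for all x,y ∈ (0,1), with equality iff x = y. -/
open Filter Finset Set Topology

/-- The Gaussian hypergeometric function `₂F₁(a,b;c;x) = Σ (a)ₙ(b)ₙ/((c)ₙ n!) xⁿ`. -/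
noncomputable def hyperF (a b c x : ℝ) : ℝ :=
  ∑' n : ℕ, ascFac a n * ascFac b n / (ascFac c n * n.factorial) * x ^ n

lemma aux_tendsto_ratio (α γ : ℝ) (hγ : 0 < γ) :
    Tendsto (fun n : ℕ => (α + n) / (γ + n)) atTop (𝓝 1) := by
  have h1 : Tendsto (fun n : ℕ => (α - γ) / (γ + n)) atTop (𝓝 0) := by
    apply Tendsto.div_atTop tendsto_const_nhds
    exact tendsto_atTop_add_const_left _ γ tendsto_natCast_atTop_atTop
  have h2 := h1.const_add 1
  rw [add_zero] at h2
  refine h2.congr fun n => ?_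
  have hne : γ + (n : ℝ) ≠ 0 := by positivity
  field_simp
  ring

lemma summable_ratio_one {A : ℕ → ℝ} (hA : ∀ n, 0 < A n)
    (hlim : Tendsto (fun n => A (n + 1) / A n) atTop (𝓝 1)) {x : ℝ} (hx : |x| < 1) :
    Summable (fun n => A n * x ^ n) := by
  rcases eq_or_ne x 0 with rfl | hx0
  · apply summable_of_ne_finset_zero (s := {0})
    intro n hn
    simp only [Finset.mem_singleton] at hn
    simp [zero_pow hn]
  · have hax : 0 < |x| := abs_pos.2 hx0
    set r := (1 + |x|) / 2 with hr
    have hxr : |x| < r := by rw [hr]; linarith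
    have hr1 : r < 1 := by rw [hr]; linarith
    apply summable_of_ratio_norm_eventually_le hr1
    have hq : (1 : ℝ) < r / |x| := (one_lt_div hax).2 hxr
    filter_upwards [hlim.eventually_lt_const hq] with n hn
    have h1 : A (n + 1) * |x| ≤ r * A n := by
      rw [div_lt_div_iff₀ (hA n) hax] at hn
      linarith
    have h2 : (0:ℝ) ≤ |x| ^ n := by positivity
    calc ‖A (n + 1) * x ^ (n + 1)‖ = A (n + 1) * |x| * |x| ^ n := by
          rw [norm_mul, norm_pow, Real.norm_eq_abs, Real.norm_eq_abs,
            abs_of_pos (hA _), pow_succ]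
          ring
      _ ≤ (r * A n) * |x| ^ n := by
          exact mul_le_mul_of_nonneg_right h1 h2
      _ = r * ‖A n * x ^ n‖ := by
          rw [norm_mul, norm_pow, Real.norm_eq_abs, Real.norm_eq_abs, abs_of_pos (hA _)]
          ring

lemma ratio_shift {A : ℕ → ℝ} (hA : ∀ n, 0 < A n)
    (hlim : Tendsto (fun n => A (n + 1) / A n) atTop (𝓝 1)) :
    Tendsto (fun n : ℕ => (((n : ℝ) + 1) + 1) * A (n + 1 + 1) / (((n : ℝ) + 1) * A (n + 1)))
      atTop (𝓝 1) := by
  have h1 : Tendsto (fun n : ℕ => ((2 : ℝ) + n) / (1 + n)) atTop (𝓝 1) :=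
    aux_tendsto_ratio 2 1 one_pos
  have h2 : Tendsto (fun n : ℕ => A (n + 1 + 1) / A (n + 1)) atTop (𝓝 1) :=
    hlim.comp (tendsto_add_atTop_nat 1)
  have h3 := h1.mul h2
  rw [mul_one] at h3
  refine h3.congr fun n => ?_
  have hne1 : ((1 : ℝ) + n) ≠ 0 := by positivity
  have hne2 : A (n + 1) ≠ 0 := (hA _).ne'
  field_simp
  ring

lemma hasDerivAt_tsum_ratio {A : ℕ → ℝ} (hA : ∀ n, 0 < A n)
    (hlim : Tendsto (fun n => A (n + 1) / A n) atTop (𝓝 1)) {x : ℝ} (hx : |x| < 1) :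
    HasDerivAt (fun t => ∑' n, A n * t ^ n)
      (∑' n : ℕ, ((n : ℝ) + 1) * A (n + 1) * x ^ n) x := by
  have hax : (0:ℝ) ≤ |x| := abs_nonneg x
  set r := (1 + |x|) / 2 with hr
  have hr0 : 0 < r := by rw [hr]; linarith
  have hxr : |x| < r := by rw [hr]; linarith
  have hr1 : r < 1 := by rw [hr]; linarith
  set B : ℕ → ℝ := fun n => ((n : ℝ) + 1) * A (n + 1) with hB
  have hBpos : ∀ n, 0 < B n := fun n => mul_pos (by positivity) (hA _)
  have hBlim : Tendsto (fun n => B (n + 1) / B n) atTop (𝓝 1) := by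
    refine (ratio_shift hA hlim).congr fun n => ?_
    simp only [hB]
    push_cast
    ring_nf
  have hrabs : |r| < 1 := by rwa [abs_of_pos hr0]
  have hu : Summable (fun n => B n * r ^ n) := summable_ratio_one hBpos hBlim hrabs
  set u : ℕ → ℝ := fun n => (n : ℝ) * A n * r ^ (n - 1) with hu'
  have husum : Summable u := by
    rw [← summable_nat_add_iff 1]
    refine hu.congr fun n => ?_
    simp only [hB, hu', Nat.add_sub_cancel]
    push_cast
    ring
  have hxmem : x ∈ Ioo (-r) r := by
    constructor <;> [linarith [neg_abs_le x]; linarith [le_abs_self x]]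
  have hbound : ∀ (n : ℕ), ∀ y ∈ Ioo (-r) r, ‖A n * ((n : ℝ) * y ^ (n - 1))‖ ≤ u n := by
    intro n y hy
    have hyr : |y| ≤ r := (abs_lt.2 ⟨hy.1, hy.2⟩).le
    rw [norm_mul, norm_mul, norm_pow, Real.norm_eq_abs, Real.norm_eq_abs, Real.norm_eq_abs,
      abs_of_pos (hA n), Nat.abs_cast, hu']
    have h1 : |y| ^ (n - 1) ≤ r ^ (n - 1) := pow_le_pow_left₀ (abs_nonneg y) hyr _
    have h2 : (0:ℝ) ≤ (n : ℝ) := n.cast_nonneg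
    calc A n * ((n : ℝ) * |y| ^ (n - 1)) ≤ A n * ((n : ℝ) * r ^ (n - 1)) := by
          apply mul_le_mul_of_nonneg_left _ (hA n).le
          exact mul_le_mul_of_nonneg_left h1 h2
      _ = (n : ℝ) * A n * r ^ (n - 1) := by ring
  have key := hasDerivAt_tsum_of_isPreconnected husum isOpen_Ioo isPreconnected_Ioo
    (g := fun n t => A n * t ^ n) (g' := fun n y => A n * ((n : ℝ) * y ^ (n - 1)))
    (fun n y _ => (hasDerivAt_pow n y).const_mul (A n))
    hbound hxmem (summable_ratio_one hA hlim hx) hxmem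
  have hs : Summable (fun n => A n * ((n : ℝ) * x ^ (n - 1))) :=
    Summable.of_norm_bounded husum fun n => hbound n x hxmem
  have hsum_eq : ∑' n, A n * ((n : ℝ) * x ^ (n - 1))
      = ∑' n : ℕ, ((n : ℝ) + 1) * A (n + 1) * x ^ n := by
    rw [Summable.tsum_eq_zero_add hs]
    simp only [Nat.cast_zero, zero_mul, mul_zero, zero_add, Nat.add_sub_cancel]
    refine tsum_congr fun n => ?_
    push_cast
    ring
  rwa [hsum_eq] at key

lemma ascFac_pos {a : ℝ} (ha : 0 < a) : ∀ n, 0 < ascFac a n := by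
  intro n
  induction n with
  | zero => simp [ascFac]
  | succ n ih =>
    rw [ascFac]
    have : (0:ℝ) < a + n := by positivity
    exact mul_pos ih this

theorem stmt10 (a b c : ℝ) (ha : 0 < a) (hb : 0 < b) (hc : 0 < c)
    (h : a * b / (a + b + 1) < c) :
    ConvexOn ℝ (Set.Ioo 0 1) (fun x => Real.log (hyperF a b c x)) ∧
      ∀ x ∈ Set.Ioo (0:ℝ) 1, ∀ y ∈ Set.Ioo (0:ℝ) 1,
        hyperF a b c ((x + y) / 2) ≤ Real.sqrt (hyperF a b c x * hyperF a b c y) ∧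
          (hyperF a b c ((x + y) / 2) = Real.sqrt (hyperF a b c x * hyperF a b c y)
            ↔ x = y) := by
  have hab : a * b < c * (a + b + 1) := by
    rw [div_lt_iff₀ (by positivity)] at h
    linarith
  set d : ℕ → ℝ := fun n => ascFac a n * ascFac b n / ascFac c n with hd
  set R : ℕ → ℝ := fun n => (a + n) * (b + n) / (c + n) with hR
  have hdpos : ∀ n, 0 < d n := fun n =>
    div_pos (mul_pos (ascFac_pos ha n) (ascFac_pos hb n)) (ascFac_pos hc n)
  have hcn : ∀ n : ℕ, (0:ℝ) < c + n := fun n => by positivity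
  have hRpos : ∀ n, 0 < R n := fun n =>
    div_pos (mul_pos (by positivity) (by positivity)) (hcn n)
  have hdR : ∀ n, d (n + 1) = d n * R n := by
    intro n
    simp only [hd, hR, ascFac]
    have h1 : ascFac c n ≠ 0 := (ascFac_pos hc n).ne'
    have h2 : c + (n:ℝ) ≠ 0 := (hcn n).ne'
    field_simp
  have hRmono : ∀ n : ℕ, R n < R (n + 1) := by
    intro n
    simp only [hR]
    push_cast
    rw [div_lt_div_iff₀ (hcn n) (by positivity)]
    push_cast
    nlinarith [mul_nonneg hc.le ((Nat.cast_nonneg n : (0:ℝ) ≤ n)), sq_nonneg ((n:ℝ)), (Nat.cast_nonneg n : (0:ℝ) ≤ n)]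
  have hlc : ∀ n, d (n + 1) ^ 2 < d n * d (n + 2) := by
    intro n
    have e1 : d n * d (n + 2) - d (n + 1) ^ 2 = d n ^ 2 * R n * (R (n + 1) - R n) := by
      rw [show n + 2 = n + 1 + 1 from rfl, hdR (n + 1), hdR n]
      ring
    nlinarith [mul_pos (mul_pos (pow_pos (hdpos n) 2) (hRpos n)) (sub_pos.2 (hRmono n))]
  have hpair : ∀ j k : ℕ, 2 * (d (j + 1) * d (k + 1)) ≤ d j * d (k + 2) + d k * d (j + 2) := by
    intro j k
    have h1 := (hlc j).le
    have h2 := (hlc k).le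
    have huv : (d (j + 1) * d (k + 1)) ^ 2 ≤ (d j * d (k + 2)) * (d k * d (j + 2)) := by
      calc (d (j + 1) * d (k + 1)) ^ 2 = d (j + 1) ^ 2 * d (k + 1) ^ 2 := by ring
        _ ≤ (d j * d (j + 2)) * (d k * d (k + 2)) := by
            apply mul_le_mul h1 h2 (sq_nonneg _) (mul_pos (hdpos j) (hdpos (j + 2))).le
        _ = (d j * d (k + 2)) * (d k * d (j + 2)) := by ring
    nlinarith [huv, sq_nonneg (d j * d (k + 2) - d k * d (j + 2)),
      mul_pos (hdpos j) (hdpos (k + 2)), mul_pos (hdpos k) (hdpos (j + 2)),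
      mul_pos (hdpos (j + 1)) (hdpos (k + 1))]
  -- coefficients
  set A : ℕ → ℝ := fun n => ascFac a n * ascFac b n / (ascFac c n * n.factorial) with hA
  set Bc : ℕ → ℝ := fun n => ((n : ℝ) + 1) * A (n + 1) with hBc
  set Cc : ℕ → ℝ := fun n => ((n : ℝ) + 1) * Bc (n + 1) with hCc
  have hfactpos : ∀ n : ℕ, (0:ℝ) < n.factorial := fun n => by
    exact_mod_cast n.factorial_pos
  have hAd : ∀ n, A n = d n / n.factorial := by
    intro n
    simp only [hA, hd]
    rw [div_div]
  have hApos : ∀ n, 0 < A n := fun n => by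
    rw [hAd]; exact div_pos (hdpos n) (hfactpos n)
  have hBd : ∀ n, Bc n = d (n + 1) / n.factorial := by
    intro n
    simp only [hBc]
    rw [hAd, Nat.factorial_succ]
    have h1 : ((n:ℝ) + 1) ≠ 0 := by positivity
    have h2 : ((n.factorial : ℝ)) ≠ 0 := (hfactpos n).ne'
    push_cast
    field_simp
  have hBpos : ∀ n, 0 < Bc n := fun n => by
    rw [hBd]; exact div_pos (hdpos _) (hfactpos n)
  have hCd : ∀ n, Cc n = d (n + 2) / n.factorial := by
    intro n
    simp only [hCc]
    rw [hBd, Nat.factorial_succ]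
    have h1 : ((n:ℝ) + 1) ≠ 0 := by positivity
    have h2 : ((n.factorial : ℝ)) ≠ 0 := (hfactpos n).ne'
    push_cast
    field_simp
  have hCpos : ∀ n, 0 < Cc n := fun n => by
    rw [hCd]; exact div_pos (hdpos _) (hfactpos n)
  -- limits
  have hlimA : Tendsto (fun n => A (n + 1) / A n) atTop (𝓝 1) := by
    have base := (aux_tendsto_ratio a c hc).mul (aux_tendsto_ratio b 1 one_pos)
    rw [mul_one] at base
    refine base.congr fun n => ?_
    rw [hAd, hAd, hdR n, Nat.factorial_succ]
    have h1 : d n ≠ 0 := (hdpos n).ne'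
    have h2 : c + (n:ℝ) ≠ 0 := (hcn n).ne'
    have h3 : ((n.factorial : ℝ)) ≠ 0 := (hfactpos n).ne'
    have h4 : (1:ℝ) + n ≠ 0 := by positivity
    simp only [hR]
    push_cast
    field_simp
    ring
  have hlimB : Tendsto (fun n => Bc (n + 1) / Bc n) atTop (𝓝 1) := by
    refine (ratio_shift hApos hlimA).congr fun n => ?_
    simp only [hBc]
    push_cast
    ring_nf
  have hlimC : Tendsto (fun n => Cc (n + 1) / Cc n) atTop (𝓝 1) := by
    refine (ratio_shift hBpos hlimB).congr fun n => ?_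
    simp only [hCc]
    push_cast
    ring_nf
  -- functions
  set f : ℝ → ℝ := fun t => ∑' n : ℕ, A n * t ^ n with hfe
  set Df : ℝ → ℝ := fun t => ∑' n : ℕ, Bc n * t ^ n with hDfe
  set DDf : ℝ → ℝ := fun t => ∑' n : ℕ, Cc n * t ^ n with hDDfe
  have hf' : ∀ x : ℝ, |x| < 1 → HasDerivAt f (Df x) x := by
    intro x hx
    have key := hasDerivAt_tsum_ratio hApos hlimA hx
    rw [hfe, hDfe]
    simp only [hBc]
    exact key
  have hDf' : ∀ x : ℝ, |x| < 1 → HasDerivAt Df (DDf x) x := by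
    intro x hx
    have key := hasDerivAt_tsum_ratio hBpos hlimB hx
    rw [hDfe, hDDfe]
    simp only [hCc]
    exact key
  have habs : ∀ x : ℝ, x ∈ Ioo (0:ℝ) 1 → |x| < 1 := fun x hx =>
    abs_lt.2 ⟨by linarith [hx.1], hx.2⟩
  have hfpos : ∀ x ∈ Ioo (0:ℝ) 1, 0 < f x := by
    intro x hx
    have sA := summable_ratio_one hApos hlimA (habs x hx)
    have h0 : (0:ℝ) < A 0 * x ^ 0 := by
      simpa using hApos 0
    calc (0:ℝ) < A 0 * x ^ 0 := h0
      _ ≤ f x := by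
          rw [hfe]
          exact Summable.le_tsum sA 0 fun m _ => mul_nonneg (hApos m).le (pow_nonneg hx.1.le m)
  have hkey : ∀ x ∈ Ioo (0:ℝ) 1, 0 < f x * DDf x - Df x * Df x := by
    intro x hx
    have hx1 := habs x hx
    have sA := summable_ratio_one hApos hlimA hx1
    have sB := summable_ratio_one hBpos hlimB hx1
    have sC := summable_ratio_one hCpos hlimC hx1
    have hnn : ∀ (D : ℕ → ℝ), (∀ n, 0 < D n) →
        ∀ n, ‖D n * x ^ n‖ = D n * x ^ n := fun D hD n => by
      rw [Real.norm_eq_abs, abs_of_nonneg (mul_nonneg (hD n).le (pow_nonneg hx.1.le n))]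
    have snA : Summable fun n => ‖A n * x ^ n‖ := sA.congr fun n => (hnn A hApos n).symm
    have snB : Summable fun n => ‖Bc n * x ^ n‖ := sB.congr fun n => (hnn Bc hBpos n).symm
    have snC : Summable fun n => ‖Cc n * x ^ n‖ := sC.congr fun n => (hnn Cc hCpos n).symm
    have hre1 : ∀ m : ℕ, (∑ kl ∈ antidiagonal m, (A kl.1 * x ^ kl.1) * (Cc kl.2 * x ^ kl.2))
        = (∑ kl ∈ antidiagonal m, A kl.1 * Cc kl.2) * x ^ m := by
      intro m
      rw [Finset.sum_mul]
      refine Finset.sum_congr rfl fun kl hkl => ?_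
      have hm : kl.1 + kl.2 = m := Finset.HasAntidiagonal.mem_antidiagonal.1 hkl
      rw [← hm, pow_add]
      ring
    have hre2 : ∀ m : ℕ, (∑ kl ∈ antidiagonal m, (Bc kl.1 * x ^ kl.1) * (Bc kl.2 * x ^ kl.2))
        = (∑ kl ∈ antidiagonal m, Bc kl.1 * Bc kl.2) * x ^ m := by
      intro m
      rw [Finset.sum_mul]
      refine Finset.sum_congr rfl fun kl hkl => ?_
      have hm : kl.1 + kl.2 = m := Finset.HasAntidiagonal.mem_antidiagonal.1 hkl
      rw [← hm, pow_add]
      ring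
    have hprod1 : f x * DDf x
        = ∑' m : ℕ, (∑ kl ∈ antidiagonal m, A kl.1 * Cc kl.2) * x ^ m := by
      rw [hfe, hDDfe]
      rw [tsum_mul_tsum_eq_tsum_sum_antidiagonal_of_summable_norm snA snC]
      exact tsum_congr hre1
    have hprod2 : Df x * Df x
        = ∑' m : ℕ, (∑ kl ∈ antidiagonal m, Bc kl.1 * Bc kl.2) * x ^ m := by
      rw [hDfe]
      rw [tsum_mul_tsum_eq_tsum_sum_antidiagonal_of_summable_norm snB snB]
      exact tsum_congr hre2
    have s1 : Summable fun m => (∑ kl ∈ antidiagonal m, A kl.1 * Cc kl.2) * x ^ m := by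
      refine (summable_sum_mul_antidiagonal_of_summable_norm' snA sA snC sC).congr fun m => hre1 m
    have s2 : Summable fun m => (∑ kl ∈ antidiagonal m, Bc kl.1 * Bc kl.2) * x ^ m := by
      refine (summable_sum_mul_antidiagonal_of_summable_norm' snB sB snB sB).congr fun m => hre2 m
    set γ : ℕ → ℝ := fun m => ∑ kl ∈ antidiagonal m, (A kl.1 * Cc kl.2 - Bc kl.1 * Bc kl.2)
      with hγ
    have hγe : ∀ m : ℕ, (∑ kl ∈ antidiagonal m, A kl.1 * Cc kl.2) * x ^ m
        - (∑ kl ∈ antidiagonal m, Bc kl.1 * Bc kl.2) * x ^ m = γ m * x ^ m := by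
      intro m
      simp only [hγ]
      rw [Finset.sum_sub_distrib, sub_mul]
    have hdiff : f x * DDf x - Df x * Df x = ∑' m : ℕ, γ m * x ^ m := by
      rw [hprod1, hprod2, ← Summable.tsum_sub s1 s2]
      exact tsum_congr hγe
    have hterm : ∀ j k : ℕ,
        0 ≤ (A j * Cc k - Bc j * Bc k) + (A k * Cc j - Bc k * Bc j) := by
      intro j k
      have e : (A j * Cc k - Bc j * Bc k) + (A k * Cc j - Bc k * Bc j)
          = (d j * d (k + 2) + d k * d (j + 2) - 2 * (d (j + 1) * d (k + 1)))
            / (j.factorial * k.factorial) := by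
        rw [hAd, hAd, hBd, hBd, hCd, hCd]
        field_simp
        ring
      rw [e]
      apply div_nonneg _ (by positivity)
      linarith [hpair j k]
    have hγnn : ∀ m, 0 ≤ γ m := by
      intro m
      have hswap := Finset.Nat.sum_antidiagonal_swap
        (n := m) (f := fun kl : ℕ × ℕ => A kl.2 * Cc kl.1 - Bc kl.2 * Bc kl.1)
      simp only [Prod.fst_swap, Prod.snd_swap] at hswap
      have h2γ : 2 * γ m = ∑ kl ∈ antidiagonal m,
          ((A kl.1 * Cc kl.2 - Bc kl.1 * Bc kl.2) + (A kl.2 * Cc kl.1 - Bc kl.2 * Bc kl.1)) := by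
        rw [Finset.sum_add_distrib, ← hswap, hγ]
        ring
      have hsum := Finset.sum_nonneg
        (fun kl (_ : kl ∈ antidiagonal m) => hterm kl.1 kl.2)
      rw [← h2γ] at hsum
      linarith
    have hγ0 : 0 < γ 0 := by
      rw [hγ]
      simp only [Finset.Nat.antidiagonal_zero, Finset.sum_singleton]
      rw [hAd, hBd, hCd]
      simp only [Nat.factorial_zero, Nat.cast_one, div_one]
      nlinarith [hlc 0]
    have hsd : Summable fun m => γ m * x ^ m := (s1.sub s2).congr hγe
    rw [hdiff]
    calc (0:ℝ) < γ 0 * x ^ 0 := by simpa using hγ0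
      _ ≤ ∑' m, γ m * x ^ m :=
          Summable.le_tsum hsd 0 fun m _ => mul_nonneg (hγnn m) (pow_nonneg hx.1.le m)
  -- calculus
  set g : ℝ → ℝ := fun x => Real.log (f x) with hg
  have hgd : ∀ x ∈ Ioo (0:ℝ) 1, HasDerivAt g (Df x / f x) x := by
    intro x hx
    have h1 := hf' x (habs x hx)
    have h2 := (Real.hasDerivAt_log (hfpos x hx).ne').comp x h1
    rw [hg]
    simpa [Function.comp_def, div_eq_inv_mul] using h2
  have hDfd : ∀ x ∈ Ioo (0:ℝ) 1,
      HasDerivAt (fun y => Df y / f y) ((DDf x * f x - Df x * Df x) / f x ^ 2) x := by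
    intro x hx
    exact (hDf' x (habs x hx)).div (hf' x (habs x hx)) (hfpos x hx).ne'
  have hstrict : StrictConvexOn ℝ (Ioo (0:ℝ) 1) g := by
    apply strictConvexOn_of_deriv2_pos (convex_Ioo 0 1)
    · intro x hx
      exact (hgd x hx).continuousAt.continuousWithinAt
    · intro x hx
      rw [interior_Ioo] at hx
      have hit : deriv^[2] g x = deriv (deriv g) x := by
        simp [Function.iterate_succ_apply', Function.iterate_zero_apply]
      rw [hit]
      have hEq : deriv g =ᶠ[𝓝 x] fun y => Df y / f y := by
        filter_upwards [isOpen_Ioo.mem_nhds hx] with y hy using (hgd y hy).deriv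
      rw [hEq.deriv_eq, (hDfd x hx).deriv]
      apply div_pos
      · nlinarith [hkey x hx]
      · exact pow_pos (hfpos x hx) 2
  have hfF : ∀ z : ℝ, hyperF a b c z = f z := by
    intro z
    rw [hfe, hA, hyperF]
  constructor
  · have hgF : (fun x => Real.log (hyperF a b c x)) = g := by
      funext z
      rw [hg, hfF z]
    rw [hgF]
    exact hstrict.convexOn
  · intro x hx y hy
    have hm : (x + y) / 2 ∈ Ioo (0:ℝ) 1 :=
      ⟨by have := hx.1; have := hy.1; linarith, by have := hx.2; have := hy.2; linarith⟩
    rw [hfF, hfF, hfF]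
    rcases eq_or_ne x y with rfl | hxy
    · have hxx : (x + x) / 2 = x := by ring
      rw [hxx, Real.sqrt_mul_self (hfpos x hx).le]
      exact ⟨le_rfl, ⟨fun _ => rfl, fun _ => rfl⟩⟩
    · have h12 : (0:ℝ) < 1 / 2 := by norm_num
      have hlt := hstrict.2 hx hy hxy h12 h12 (by norm_num)
      simp only [smul_eq_mul, hg] at hlt
      have hmm : 1 / 2 * x + 1 / 2 * y = (x + y) / 2 := by ring
      rw [hmm] at hlt
      set E := Real.exp ((Real.log (f x) + Real.log (f y)) / 2) with hE
      have hE2 : E ^ 2 = f x * f y := by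
        rw [hE, sq, ← Real.exp_add,
          show (Real.log (f x) + Real.log (f y)) / 2 + (Real.log (f x) + Real.log (f y)) / 2
            = Real.log (f x) + Real.log (f y) by ring,
          Real.exp_add, Real.exp_log (hfpos x hx), Real.exp_log (hfpos y hy)]
      have hsq : Real.sqrt (f x * f y) = E := by
        rw [← hE2, Real.sqrt_sq (Real.exp_pos _).le]
      have h2 : f ((x + y) / 2) < E := by
        rw [← Real.exp_log (hfpos _ hm), hE]
        exact Real.exp_lt_exp.2 (by linarith)
      rw [hsq]
      exact ⟨h2.le, ⟨fun he => absurd he h2.ne, fun he => absurd he hxy⟩⟩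
end

section
/- Let F(x) = ₂F₁(a,b;c;x) with a,b,c > 0. If (a−c)(b−c) > 0, then t ↦ log F(1−e^{−t}) is concave on (0,∞); in particular √(F(x)F(y)) ≤ F(1−√((1−x)(1−y))) for all x,y ∈ (0,1), with equality iff x = y. -/
namespace Stmt11Aux

noncomputable def q (a b c : ℝ) (n : ℕ) : ℝ :=
  ascFac a n * ascFac b n / (ascFac c n * n.factorial)

lemma hyperF_eq (a b c x : ℝ) : hyperF a b c x = ∑' n : ℕ, q a b c n * x ^ n := rfl

lemma ascFac_pos {a : ℝ} (ha : 0 < a) (n : ℕ) : 0 < ascFac a n := by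
  induction n with
  | zero => norm_num [ascFac]
  | succ n ih => exact mul_pos ih (by positivity)

variable {a b c : ℝ}

lemma q_pos (ha : 0 < a) (hb : 0 < b) (hc : 0 < c) (n : ℕ) : 0 < q a b c n := by
  have := ascFac_pos ha n
  have := ascFac_pos hb n
  have := ascFac_pos hc n
  have : (0:ℝ) < n.factorial := by positivity
  unfold q; positivity

lemma q_succ (ha : 0 < a) (hb : 0 < b) (hc : 0 < c) (n : ℕ) :
    q a b c (n + 1) = q a b c n * ((a + n) * (b + n) / ((c + n) * (n + 1))) := by
  have h1 := (ascFac_pos ha n).ne'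
  have h2 := (ascFac_pos hb n).ne'
  have h3 := (ascFac_pos hc n).ne'
  have h4 : ((n:ℝ) + 1) ≠ 0 := by positivity
  have h5 : (n.factorial : ℝ) ≠ 0 := by positivity
  have h6 : ((c:ℝ) + n) ≠ 0 := by positivity
  simp only [q, ascFac, Nat.factorial_succ, Nat.cast_mul, Nat.cast_add, Nat.cast_one]
  field_simp

lemma tendsto_ratio (hc : 0 < c) :
    Filter.Tendsto (fun n : ℕ => (a + n) * (b + n) / ((c + n) * ((n:ℝ) + 1)))
      Filter.atTop (nhds 1) := by
  have hden1 : Filter.Tendsto (fun n : ℕ => ((n:ℝ) + 1)) Filter.atTop Filter.atTop :=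
    Filter.tendsto_atTop_add_const_right _ 1 tendsto_natCast_atTop_atTop
  have hden2 : Filter.Tendsto (fun n : ℕ => (c + (n:ℝ))) Filter.atTop Filter.atTop :=
    Filter.tendsto_atTop_add_const_left _ c tendsto_natCast_atTop_atTop
  have h1 : Filter.Tendsto (fun n : ℕ => (a + n) / ((n:ℝ) + 1)) Filter.atTop (nhds 1) := by
    have := Filter.Tendsto.div_atTop (tendsto_const_nhds (x := a - 1)) hden1
    have heq : (fun n : ℕ => (a + n) / ((n:ℝ) + 1))
        = fun n : ℕ => 1 + (a - 1) / ((n:ℝ) + 1) := by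
      funext n
      have : ((n:ℝ) + 1) ≠ 0 := by positivity
      field_simp; ring
    rw [heq]
    simpa using (tendsto_const_nhds (x := (1:ℝ))).add this
  have h2 : Filter.Tendsto (fun n : ℕ => (b + n) / (c + (n:ℝ))) Filter.atTop (nhds 1) := by
    have := Filter.Tendsto.div_atTop (tendsto_const_nhds (x := b - c)) hden2
    have heq : (fun n : ℕ => (b + n) / (c + (n:ℝ)))
        = fun n : ℕ => 1 + (b - c) / (c + (n:ℝ)) := by
      funext n
      have : (c + (n:ℝ)) ≠ 0 := by positivity
      field_simp; ring
    rw [heq]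
    simpa using (tendsto_const_nhds (x := (1:ℝ))).add this
  have heq : (fun n : ℕ => (a + n) * (b + n) / ((c + n) * ((n:ℝ) + 1)))
      = fun n : ℕ => ((a + n) / ((n:ℝ) + 1)) * ((b + n) / (c + (n:ℝ))) := by
    funext n
    have h4 : ((n:ℝ) + 1) ≠ 0 := by positivity
    have h6 : (c + (n:ℝ)) ≠ 0 := by positivity
    rw [div_mul_div_comm, div_eq_div_iff (by positivity) (by positivity)]
    ring
  rw [heq]
  simpa using h1.mul h2


lemma summable_w (ha : 0 < a) (hb : 0 < b) (hc : 0 < c) {r : ℝ} (hr0 : 0 < r) (hr1 : r < 1) :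
    Summable (fun n : ℕ => ((n:ℝ) + 1) * q a b c n * r ^ n) := by
  set r' := (1 + r) / 2 with hr'def
  have hrr' : r < r' := by rw [hr'def]; linarith
  have hr'1 : r' < 1 := by rw [hr'def]; linarith
  apply summable_of_ratio_norm_eventually_le hr'1
  have hR : Filter.Tendsto
      (fun n : ℕ => ((n:ℝ) + 2) / ((n:ℝ) + 1) * ((a + n) * (b + n) / ((c + n) * ((n:ℝ) + 1))) * r)
      Filter.atTop (nhds r) := by
    have h1 : Filter.Tendsto (fun n : ℕ => ((n:ℝ) + 2) / ((n:ℝ) + 1)) Filter.atTop (nhds 1) := by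
      have hden1 : Filter.Tendsto (fun n : ℕ => ((n:ℝ) + 1)) Filter.atTop Filter.atTop :=
        Filter.tendsto_atTop_add_const_right _ 1 tendsto_natCast_atTop_atTop
      have := Filter.Tendsto.div_atTop (tendsto_const_nhds (x := (1:ℝ))) hden1
      have heq : (fun n : ℕ => ((n:ℝ) + 2) / ((n:ℝ) + 1))
          = fun n : ℕ => 1 + 1 / ((n:ℝ) + 1) := by
        funext n
        have : ((n:ℝ) + 1) ≠ 0 := by positivity
        field_simp
        ring
      rw [heq]
      simpa using (tendsto_const_nhds (x := (1:ℝ))).add this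
    simpa using (h1.mul (tendsto_ratio hc)).mul (tendsto_const_nhds (x := r))
  filter_upwards [hR.eventually_lt_const hrr'] with n hn
  have hq := q_pos ha hb hc n
  have hq1 := q_pos ha hb hc (n + 1)
  have h4 : ((n:ℝ) + 1) ≠ 0 := by positivity
  have hwn : (0:ℝ) < ((n:ℝ) + 1) * q a b c n * r ^ n := by positivity
  have hid : ((n:ℝ) + 1 + 1) * q a b c (n + 1) * r ^ (n + 1)
      = (((n:ℝ) + 1) * q a b c n * r ^ n) *
        (((n:ℝ) + 2) / ((n:ℝ) + 1) * ((a + n) * (b + n) / ((c + n) * ((n:ℝ) + 1))) * r) := by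
    rw [q_succ ha hb hc n]
    rw [pow_succ]
    field_simp
    ring
  rw [Real.norm_eq_abs, Real.norm_eq_abs, abs_of_pos (by positivity), abs_of_pos hwn]
  push_cast
  rw [hid]
  have hRn0 : 0 ≤ ((n:ℝ) + 2) / ((n:ℝ) + 1) * ((a + n) * (b + n) / ((c + n) * ((n:ℝ) + 1))) * r := by
    positivity
  calc (((n:ℝ) + 1) * q a b c n * r ^ n) *
        (((n:ℝ) + 2) / ((n:ℝ) + 1) * ((a + n) * (b + n) / ((c + n) * ((n:ℝ) + 1))) * r)
      ≤ (((n:ℝ) + 1) * q a b c n * r ^ n) * r' := by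
        exact mul_le_mul_of_nonneg_left hn.le hwn.le
    _ = r' * (((n:ℝ) + 1) * q a b c n * r ^ n) := by ring

lemma summable_q_pow (ha : 0 < a) (hb : 0 < b) (hc : 0 < c) {x : ℝ} (hx0 : 0 < x) (hx1 : x < 1) :
    Summable (fun n : ℕ => q a b c n * x ^ n) := by
  refine (summable_w ha hb hc hx0 hx1).of_nonneg_of_le (fun n => ?_) (fun n => ?_)
  · have := q_pos ha hb hc n; positivity
  · have hq := q_pos ha hb hc n
    have hxn : (0:ℝ) < x ^ n := by positivity
    nlinarith [mul_nonneg (Nat.cast_nonneg (α := ℝ) n) (mul_pos hq hxn).le]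

lemma summable_nq (ha : 0 < a) (hb : 0 < b) (hc : 0 < c) {ρ : ℝ} (hρ0 : 0 < ρ) (hρ1 : ρ < 1) :
    Summable (fun n : ℕ => (n:ℝ) * q a b c n * ρ ^ (n - 1)) := by
  refine ((summable_w ha hb hc hρ0 hρ1).mul_left (1/ρ)).of_nonneg_of_le (fun n => ?_) (fun n => ?_)
  · have := q_pos ha hb hc n; positivity
  · have hq := q_pos ha hb hc n
    match n with
    | 0 => simp; positivity
    | Nat.succ m =>
      have hq := q_pos ha hb hc (m + 1)
      have h1 : (m + 1 : ℕ) - 1 = m := rfl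
      rw [h1]
      have h2 : (1/ρ) * (((m:ℝ) + 1 + 1) * q a b c (m+1) * ρ ^ (m+1))
          = ((m:ℝ) + 2) * q a b c (m+1) * ρ ^ m := by
        rw [pow_succ]; field_simp; ring
      push_cast
      rw [h2]
      have hρm : (0:ℝ) < ρ ^ m := by positivity
      nlinarith [mul_nonneg (Nat.cast_nonneg (α := ℝ) m) (mul_pos hq hρm).le,
        (mul_pos hq hρm).le]

lemma hasDerivAt_hyperF (ha : 0 < a) (hb : 0 < b) (hc : 0 < c) {x : ℝ}
    (hx : x ∈ Set.Ioo (0:ℝ) 1) :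
    HasDerivAt (hyperF a b c) (∑' n : ℕ, (n:ℝ) * q a b c n * x ^ (n - 1)) x := by
  obtain ⟨hx0, hx1⟩ := hx
  set ρ := (1 + x) / 2 with hρdef
  have hρ0 : 0 < ρ := by rw [hρdef]; linarith
  have hxρ : x < ρ := by rw [hρdef]; linarith
  have hρ1 : ρ < 1 := by rw [hρdef]; linarith
  have key := hasDerivAt_tsum_of_isPreconnected
    (u := fun n : ℕ => (n:ℝ) * q a b c n * ρ ^ (n - 1))
    (g := fun (n : ℕ) (y : ℝ) => q a b c n * y ^ n)
    (g' := fun (n : ℕ) (y : ℝ) => (n:ℝ) * q a b c n * y ^ (n - 1))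
    (summable_nq ha hb hc hρ0 hρ1) (isOpen_Ioo (a := (0:ℝ)) (b := ρ)) isPreconnected_Ioo
    (fun n y _ => by
      have := (hasDerivAt_pow n y).const_mul (q a b c n)
      exact this.congr_deriv (by ring))
    (fun n y hy => by
      have hq := q_pos ha hb hc n
      have hy0 : 0 < y := hy.1
      rw [Real.norm_eq_abs, abs_of_nonneg (by positivity)]
      have hyρ : y ^ (n - 1) ≤ ρ ^ (n - 1) := pow_le_pow_left₀ hy0.le hy.2.le _
      show (n:ℝ) * q a b c n * y ^ (n - 1) ≤ (n:ℝ) * q a b c n * ρ ^ (n - 1)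
      have hnq : (0:ℝ) ≤ (n:ℝ) * q a b c n := by positivity
      exact mul_le_mul_of_nonneg_left hyρ hnq)
    (Set.mem_Ioo.2 ⟨hx0, hxρ⟩) (summable_q_pow ha hb hc hx0 hx1) (Set.mem_Ioo.2 ⟨hx0, hxρ⟩)
  exact key

noncomputable def cf (a b c : ℝ) (n : ℕ) : ℝ := (a + n) * (b + n) / (c + n) - n

lemma cf_anti (hc : 0 < c) (h : (a - c) * (b - c) > 0) : StrictAnti (cf a b c) := by
  apply strictAnti_nat_of_succ_lt
  intro n
  have h6 : ((c:ℝ) + n) ≠ 0 := by positivity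
  have h7 : ((c:ℝ) + n + 1) ≠ 0 := by positivity
  have key : cf a b c n - cf a b c (n + 1) = (a - c) * (b - c) / ((c + n) * (c + n + 1)) := by
    unfold cf
    push_cast
    field_simp
    ring
  have hpos : 0 < (a - c) * (b - c) / ((c + n) * (c + n + 1)) := by
    apply div_pos h
    positivity
  linarith [key ▸ hpos]

lemma summable_shift (ha : 0 < a) (hb : 0 < b) (hc : 0 < c) {x : ℝ} (hx0 : 0 < x) (hx1 : x < 1) :
    Summable (fun n : ℕ => ((n:ℝ) + 1) * q a b c (n + 1) * x ^ n) := by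
  have := (summable_nat_add_iff (f := fun n : ℕ => (n:ℝ) * q a b c n * x ^ (n - 1)) 1).2
    (summable_nq ha hb hc hx0 hx1)
  refine this.congr fun n => ?_
  push_cast
  simp

lemma summable_nqx (ha : 0 < a) (hb : 0 < b) (hc : 0 < c) {x : ℝ} (hx0 : 0 < x) (hx1 : x < 1) :
    Summable (fun n : ℕ => (n:ℝ) * q a b c n * x ^ n) := by
  refine (summable_w ha hb hc hx0 hx1).of_nonneg_of_le (fun n => ?_) (fun n => ?_)
  · have := q_pos ha hb hc n; positivity
  · have hq := q_pos ha hb hc n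
    have hxn : (0:ℝ) < x ^ n := by positivity
    nlinarith [mul_nonneg (Nat.cast_nonneg (α := ℝ) n) (mul_pos hq hxn).le]

lemma coeff_id (ha : 0 < a) (hb : 0 < b) (hc : 0 < c) (n : ℕ) :
    ((n:ℝ) + 1) * q a b c (n + 1) - (n:ℝ) * q a b c n = cf a b c n * q a b c n := by
  rw [q_succ ha hb hc n]
  unfold cf
  have h4 : ((n:ℝ) + 1) ≠ 0 := by positivity
  have h6 : ((c:ℝ) + n) ≠ 0 := by positivity
  field_simp

lemma summable_cf (ha : 0 < a) (hb : 0 < b) (hc : 0 < c) {x : ℝ} (hx0 : 0 < x) (hx1 : x < 1) :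
    Summable (fun n : ℕ => cf a b c n * q a b c n * x ^ n) := by
  refine ((summable_shift ha hb hc hx0 hx1).sub (summable_nqx ha hb hc hx0 hx1)).congr fun n => ?_
  rw [← sub_mul, coeff_id ha hb hc n]

lemma N_eq (ha : 0 < a) (hb : 0 < b) (hc : 0 < c) {x : ℝ} (hx0 : 0 < x) (hx1 : x < 1) :
    (1 - x) * ∑' n : ℕ, (n:ℝ) * q a b c n * x ^ (n - 1)
      = ∑' n : ℕ, cf a b c n * q a b c n * x ^ n := by
  have hS := summable_nq ha hb hc hx0 hx1
  have hshift := summable_shift ha hb hc hx0 hx1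
  have hnx := summable_nqx ha hb hc hx0 hx1
  have hshift_eq : ∑' n : ℕ, (n:ℝ) * q a b c n * x ^ (n - 1)
      = ∑' n : ℕ, ((n:ℝ) + 1) * q a b c (n + 1) * x ^ n := by
    rw [Summable.tsum_eq_zero_add hS]
    simp only [Nat.cast_zero, zero_mul, zero_add]
    congr 1
    funext n
    push_cast
    simp
  have hx_eq : x * ∑' n : ℕ, (n:ℝ) * q a b c n * x ^ (n - 1)
      = ∑' n : ℕ, (n:ℝ) * q a b c n * x ^ n := by
    rw [← tsum_mul_left]
    congr 1
    funext n
    match n with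
    | 0 => simp
    | Nat.succ m =>
      have : (m + 1 : ℕ) - 1 = m := rfl
      rw [this, pow_succ]
      ring
  rw [sub_mul, one_mul, hx_eq, hshift_eq, ← Summable.tsum_sub hshift hnx]
  congr 1
  funext n
  rw [← sub_mul, coeff_id ha hb hc n]


lemma pow_diff_pos {x y : ℝ} (hx0 : 0 < x) (hxy : x < y) {m n : ℕ} (hmn : m < n) :
    0 < x ^ m * y ^ n - x ^ n * y ^ m := by
  have hy0 : 0 < y := lt_trans hx0 hxy
  obtain ⟨k, hk0, rfl⟩ : ∃ k, 0 < k ∧ n = m + k := ⟨n - m, by omega, by omega⟩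
  have h1 : x ^ m * y ^ (m + k) - x ^ (m + k) * y ^ m
      = x ^ m * y ^ m * (y ^ k - x ^ k) := by rw [pow_add, pow_add]; ring
  rw [h1]
  have h2 : x ^ k < y ^ k := pow_lt_pow_left₀ hxy hx0.le hk0.ne'
  have h3 : (0:ℝ) < x ^ m * y ^ m := by positivity
  nlinarith

set_option maxHeartbeats 1000000 in
lemma key_ineq (ha : 0 < a) (hb : 0 < b) (hc : 0 < c) (h : (a - c) * (b - c) > 0)
    {x y : ℝ} (hx : x ∈ Set.Ioo (0:ℝ) 1) (hy : y ∈ Set.Ioo (0:ℝ) 1) (hxy : x < y) :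
    (∑' n : ℕ, cf a b c n * q a b c n * y ^ n) * (∑' n : ℕ, q a b c n * x ^ n)
      < (∑' n : ℕ, cf a b c n * q a b c n * x ^ n) * (∑' n : ℕ, q a b c n * y ^ n) := by
  obtain ⟨hx0, hx1⟩ := hx
  obtain ⟨hy0, hy1⟩ := hy
  have hfx := summable_q_pow ha hb hc hx0 hx1
  have hfy := summable_q_pow ha hb hc hy0 hy1
  have hNx := summable_cf ha hb hc hx0 hx1
  have hNy := summable_cf ha hb hc hy0 hy1
  set U : ℕ × ℕ → ℝ :=
    fun p => (cf a b c p.1 * q a b c p.1 * x ^ p.1) * (q a b c p.2 * y ^ p.2) with hUdef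
  set V : ℕ × ℕ → ℝ :=
    fun p => (cf a b c p.1 * q a b c p.1 * y ^ p.1) * (q a b c p.2 * x ^ p.2) with hVdef
  have habs : ∀ (z w : ℝ), 0 < z → z < 1 → 0 < w → w < 1 →
      Summable (fun p : ℕ × ℕ =>
        (cf a b c p.1 * q a b c p.1 * z ^ p.1) * (q a b c p.2 * w ^ p.2)) := by
    intro z w hz0 hz1 hw0 hw1
    have h1 : Summable (fun p : ℕ × ℕ =>
        |cf a b c p.1 * q a b c p.1 * z ^ p.1| * (q a b c p.2 * w ^ p.2)) :=
      (summable_cf ha hb hc hz0 hz1).abs.mul_of_nonneg (summable_q_pow ha hb hc hw0 hw1)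
        (fun _ => abs_nonneg _)
        (fun n => by have := q_pos ha hb hc n; positivity)
    have h2 : Summable (fun p : ℕ × ℕ =>
        |(cf a b c p.1 * q a b c p.1 * z ^ p.1) * (q a b c p.2 * w ^ p.2)|) := by
      refine h1.congr fun p => ?_
      have hB : (0:ℝ) ≤ q a b c p.2 * w ^ p.2 := by
        have := q_pos ha hb hc p.2; positivity
      rw [abs_mul (cf a b c p.1 * q a b c p.1 * z ^ p.1) (q a b c p.2 * w ^ p.2),
        abs_of_nonneg hB]
    exact h2.of_abs
  have hU : Summable U := habs x y hx0 hx1 hy0 hy1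
  have hV : Summable V := habs y x hy0 hy1 hx0 hx1
  have hUV : Summable (fun p => U p - V p) := hU.sub hV
  have hswap : Summable (fun p : ℕ × ℕ => U p.swap - V p.swap) :=
    (Equiv.prodComm ℕ ℕ).summable_iff.2 hUV
  have hW : Summable (fun p : ℕ × ℕ => (U p - V p) + (U p.swap - V p.swap)) :=
    hUV.add hswap
  have hcfanti := cf_anti hc h
  have hWform : ∀ p : ℕ × ℕ, (U p - V p) + (U p.swap - V p.swap)
      = q a b c p.1 * q a b c p.2 * (cf a b c p.1 - cf a b c p.2)
        * (x ^ p.1 * y ^ p.2 - x ^ p.2 * y ^ p.1) := by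
    intro p
    simp only [hUdef, hVdef, Prod.fst_swap, Prod.snd_swap]
    ring
  have hWpos : ∀ p : ℕ × ℕ, p.1 ≠ p.2 →
      0 < (U p - V p) + (U p.swap - V p.swap) := by
    intro p hne
    rw [hWform p]
    have hq1 := q_pos ha hb hc p.1
    have hq2 := q_pos ha hb hc p.2
    rcases lt_or_gt_of_ne hne with hlt | hgt
    · have hcf : 0 < cf a b c p.1 - cf a b c p.2 := sub_pos.2 (hcfanti hlt)
      have hpow : 0 < x ^ p.1 * y ^ p.2 - x ^ p.2 * y ^ p.1 := pow_diff_pos hx0 hxy hlt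
      exact mul_pos (mul_pos (mul_pos hq1 hq2) hcf) hpow
    · have hcf : cf a b c p.1 - cf a b c p.2 < 0 := sub_neg.2 (hcfanti hgt)
      have hpow : x ^ p.1 * y ^ p.2 - x ^ p.2 * y ^ p.1 < 0 := by
        have := pow_diff_pos hx0 hxy hgt
        nlinarith
      have := mul_pos_of_neg_of_neg hcf hpow
      have hqq : 0 < q a b c p.1 * q a b c p.2 := mul_pos hq1 hq2
      nlinarith
  have hWnonneg : ∀ p : ℕ × ℕ, 0 ≤ (U p - V p) + (U p.swap - V p.swap) := by
    intro p
    rcases eq_or_ne p.1 p.2 with heq | hne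
    · rw [hWform p, heq]
      simp
    · exact (hWpos p hne).le
  have hsumpos : 0 < ∑' p : ℕ × ℕ, ((U p - V p) + (U p.swap - V p.swap)) :=
    Summable.tsum_pos hW hWnonneg (1, 0) (hWpos (1, 0) (by norm_num))
  have hsplit : ∑' p : ℕ × ℕ, ((U p - V p) + (U p.swap - V p.swap))
      = (∑' p : ℕ × ℕ, (U p - V p)) + ∑' p : ℕ × ℕ, (U p.swap - V p.swap) :=
    Summable.tsum_add hUV hswap
  have hswap_eq : ∑' p : ℕ × ℕ, (U p.swap - V p.swap) = ∑' p : ℕ × ℕ, (U p - V p) :=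
    (Equiv.prodComm ℕ ℕ).tsum_eq (fun p => U p - V p)
  have hdiff : 0 < ∑' p : ℕ × ℕ, (U p - V p) := by
    rw [hsplit, hswap_eq] at hsumpos
    linarith
  rw [Summable.tsum_sub hU hV] at hdiff
  have hNxfy : (∑' n : ℕ, cf a b c n * q a b c n * x ^ n) * (∑' n : ℕ, q a b c n * y ^ n)
      = ∑' p : ℕ × ℕ, U p := Summable.tsum_mul_tsum hNx hfy hU
  have hNyfx : (∑' n : ℕ, cf a b c n * q a b c n * y ^ n) * (∑' n : ℕ, q a b c n * x ^ n)
      = ∑' p : ℕ × ℕ, V p := Summable.tsum_mul_tsum hNy hfx hV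
  rw [hNxfy, hNyfx]
  linarith


lemma tsum_q_pos (ha : 0 < a) (hb : 0 < b) (hc : 0 < c) {x : ℝ} (hx0 : 0 < x) (hx1 : x < 1) :
    0 < ∑' n : ℕ, q a b c n * x ^ n := by
  refine Summable.tsum_pos (summable_q_pow ha hb hc hx0 hx1)
    (fun n => by have := q_pos ha hb hc n; positivity) 0 ?_
  have := q_pos ha hb hc 0
  simpa using this

lemma f_pos (ha : 0 < a) (hb : 0 < b) (hc : 0 < c) {x : ℝ} (hx0 : 0 < x) (hx1 : x < 1) :
    0 < hyperF a b c x := by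
  rw [hyperF_eq]
  exact tsum_q_pos ha hb hc hx0 hx1

noncomputable def GG (a b c x : ℝ) : ℝ :=
  ((1 - x) * ∑' n : ℕ, (n:ℝ) * q a b c n * x ^ (n - 1)) / hyperF a b c x

lemma GG_strictAnti (ha : 0 < a) (hb : 0 < b) (hc : 0 < c) (h : (a - c) * (b - c) > 0)
    {x y : ℝ} (hx : x ∈ Set.Ioo (0:ℝ) 1) (hy : y ∈ Set.Ioo (0:ℝ) 1) (hxy : x < y) :
    GG a b c y < GG a b c x := by
  unfold GG
  rw [N_eq ha hb hc hx.1 hx.2, N_eq ha hb hc hy.1 hy.2, hyperF_eq, hyperF_eq]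
  rw [div_lt_div_iff₀ (tsum_q_pos ha hb hc hy.1 hy.2) (tsum_q_pos ha hb hc hx.1 hx.2)]
  exact key_ineq ha hb hc h hx hy hxy

lemma mem_Ioo_of_pos {t : ℝ} (ht : 0 < t) : 1 - Real.exp (-t) ∈ Set.Ioo (0:ℝ) 1 := by
  constructor
  · have : Real.exp (-t) < 1 := Real.exp_lt_one_iff.2 (by linarith)
    linarith
  · have : 0 < Real.exp (-t) := Real.exp_pos _
    linarith

lemma hasDerivAt_g (ha : 0 < a) (hb : 0 < b) (hc : 0 < c) {t : ℝ} (ht : 0 < t) :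
    HasDerivAt (fun s => Real.log (hyperF a b c (1 - Real.exp (-s))))
      (GG a b c (1 - Real.exp (-t))) t := by
  set x := 1 - Real.exp (-t) with hxdef
  have hx : x ∈ Set.Ioo (0:ℝ) 1 := mem_Ioo_of_pos ht
  have h0 : HasDerivAt (fun s : ℝ => -s) (-1) t := (hasDerivAt_id t).neg
  have h1 : HasDerivAt (fun s : ℝ => 1 - Real.exp (-s)) (Real.exp (-t)) t := by
    have he := h0.exp
    have := he.const_sub 1
    exact this.congr_deriv (by ring)
  have h2 := hasDerivAt_hyperF ha hb hc hx
  have h3 := h2.comp t h1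
  have hfpos := f_pos ha hb hc hx.1 hx.2
  have h4 := h3.log hfpos.ne'
  refine h4.congr_deriv ?_
  unfold GG
  have hex : Real.exp (-t) = 1 - x := by rw [hxdef]; ring
  simp only [Function.comp_apply]
  rw [hex]
  generalize ∑' n : ℕ, (n:ℝ) * q a b c n * x ^ (n - 1) = S
  ring

lemma strict_concave (ha : 0 < a) (hb : 0 < b) (hc : 0 < c) (h : (a - c) * (b - c) > 0) :
    StrictConcaveOn ℝ (Set.Ioi 0)
      (fun t => Real.log (hyperF a b c (1 - Real.exp (-t)))) := by
  apply StrictAntiOn.strictConcaveOn_of_deriv (convex_Ioi 0)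
  · intro t ht
    exact (hasDerivAt_g ha hb hc ht).continuousAt.continuousWithinAt
  · rw [interior_Ioi]
    intro t1 ht1 t2 ht2 h12
    rw [(hasDerivAt_g ha hb hc ht1).deriv, (hasDerivAt_g ha hb hc ht2).deriv]
    refine GG_strictAnti ha hb hc h (mem_Ioo_of_pos ht1) (mem_Ioo_of_pos ht2) ?_
    have : Real.exp (-t2) < Real.exp (-t1) := Real.exp_lt_exp.2 (by linarith)
    linarith

end Stmt11Aux

theorem stmt11 (a b c : ℝ) (ha : 0 < a) (hb : 0 < b) (hc : 0 < c)
    (h : (a - c) * (b - c) > 0) :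
    ConcaveOn ℝ (Set.Ioi 0)
        (fun t => Real.log (hyperF a b c (1 - Real.exp (-t)))) ∧
      ∀ x ∈ Set.Ioo (0:ℝ) 1, ∀ y ∈ Set.Ioo (0:ℝ) 1,
        Real.sqrt (hyperF a b c x * hyperF a b c y) ≤
            hyperF a b c (1 - Real.sqrt ((1 - x) * (1 - y))) ∧
          (Real.sqrt (hyperF a b c x * hyperF a b c y) =
              hyperF a b c (1 - Real.sqrt ((1 - x) * (1 - y))) ↔ x = y) := by
  have hconc := Stmt11Aux.strict_concave ha hb hc h
  refine ⟨hconc.concaveOn, ?_⟩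
  rintro x ⟨hx0, hx1⟩ y ⟨hy0, hy1⟩
  have hfx := Stmt11Aux.f_pos ha hb hc hx0 hx1
  have hfy := Stmt11Aux.f_pos ha hb hc hy0 hy1
  by_cases hxy : x = y
  · subst hxy
    have h1 : Real.sqrt (hyperF a b c x * hyperF a b c x) = hyperF a b c x :=
      Real.sqrt_mul_self hfx.le
    have h2 : Real.sqrt ((1 - x) * (1 - x)) = 1 - x := Real.sqrt_mul_self (by linarith)
    rw [h1, h2]
    simp only [sub_sub_cancel]
    exact ⟨le_refl _, by simp⟩
  · -- strict case
    set s := -Real.log (1 - x) with hsdef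
    set t := -Real.log (1 - y) with htdef
    have h1x : (0:ℝ) < 1 - x := by linarith
    have h1y : (0:ℝ) < 1 - y := by linarith
    have hs : 0 < s := by
      rw [hsdef]
      have := Real.log_neg h1x (by linarith)
      linarith
    have ht : 0 < t := by
      rw [htdef]
      have := Real.log_neg h1y (by linarith)
      linarith
    have hes : Real.exp (-s) = 1 - x := by
      rw [hsdef, neg_neg, Real.exp_log h1x]
    have het : Real.exp (-t) = 1 - y := by
      rw [htdef, neg_neg, Real.exp_log h1y]
    have hgs : 1 - Real.exp (-s) = x := by rw [hes]; ring
    have hgt : 1 - Real.exp (-t) = y := by rw [het]; ring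
    have hst : s ≠ t := by
      intro hst
      apply hxy
      have : Real.exp (-s) = Real.exp (-t) := by rw [hst]
      rw [hes, het] at this
      linarith
    have hmid : Real.exp (-((1:ℝ)/2 * s + 1/2 * t)) = Real.sqrt ((1 - x) * (1 - y)) := by
      have h1 : -((1:ℝ)/2 * s + 1/2 * t) = (-s + -t) / 2 := by ring
      rw [h1, Real.exp_half, Real.exp_add, hes, het]
    have key := hconc.2 (Set.mem_Ioi.2 hs) (Set.mem_Ioi.2 ht) hst
      (by norm_num : (0:ℝ) < 1/2) (by norm_num : (0:ℝ) < 1/2) (by norm_num)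
    simp only [smul_eq_mul, hgs, hgt] at key
    -- key : 1/2 * log (F x) + 1/2 * log (F y) < log (F (1 - exp (-(1/2*s + 1/2*t))))
    have hmidpos : 0 < (1:ℝ)/2 * s + 1/2 * t := by positivity
    have hmem := Stmt11Aux.mem_Ioo_of_pos hmidpos
    rw [hmid] at hmem
    have hfm := Stmt11Aux.f_pos ha hb hc hmem.1 hmem.2
    have hsqrtpos : 0 < Real.sqrt (hyperF a b c x * hyperF a b c y) :=
      Real.sqrt_pos.2 (mul_pos hfx hfy)
    have hlog : Real.log (Real.sqrt (hyperF a b c x * hyperF a b c y))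
        = 1/2 * Real.log (hyperF a b c x) + 1/2 * Real.log (hyperF a b c y) := by
      rw [Real.log_sqrt (mul_pos hfx hfy).le, Real.log_mul hfx.ne' hfy.ne']
      ring
    have hlt : Real.log (Real.sqrt (hyperF a b c x * hyperF a b c y))
        < Real.log (hyperF a b c (1 - Real.sqrt ((1 - x) * (1 - y)))) := by
      rw [hlog, ← hmid]
      exact key
    have hfin : Real.sqrt (hyperF a b c x * hyperF a b c y)
        < hyperF a b c (1 - Real.sqrt ((1 - x) * (1 - y))) := by
      have := Real.exp_lt_exp.2 hlt
      rwa [Real.exp_log hsqrtpos, Real.exp_log hfm] at this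
    exact ⟨hfin.le, ⟨fun heq => absurd heq hfin.ne, fun heq => absurd heq hxy⟩⟩
end

section
/- Let F(x) = ₂F₁(a,b;c;x) with a,b,c > 0 and a+b ≥ c. Then t ↦ F(1−e^{−t}) is convex on (0,∞); in particular F(1−√((1−x)(1−y))) ≤ (F(x)+F(y))/2 for all x,y ∈ (0,1), with equality iff x = y. -/
open Filter Topology Real

noncomputable section HypAux
namespace HypAux

variable (a b c : ℝ)

/-- coefficients of ₂F₁ -/
def T (n : ℕ) : ℝ := ascFac a n * ascFac b n / (ascFac c n * n.factorial)

lemma ascFac_pos {a : ℝ} (ha : 0 < a) : ∀ n, 0 < ascFac a n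
  | 0 => one_pos
  | n + 1 => mul_pos (ascFac_pos ha n) (by positivity)

variable {a b c} (ha : 0 < a) (hb : 0 < b) (hc : 0 < c)

include ha hb hc

lemma T_pos (n : ℕ) : 0 < T a b c n := by
  have := ascFac_pos ha n; have := ascFac_pos hb n; have := ascFac_pos hc n
  have : (0:ℝ) < n.factorial := by exact_mod_cast n.factorial_pos
  unfold T; positivity

omit ha hb in
lemma T_succ (n : ℕ) :
    T a b c (n + 1) = T a b c n * ((a + n) * (b + n) / ((c + n) * (n + 1))) := by
  have h1 := (ascFac_pos hc n).ne'
  have h2 : ((n.factorial : ℝ)) ≠ 0 := by exact_mod_cast n.factorial_pos.ne'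
  have h3 : (c + n) ≠ 0 := by positivity
  have h4 : ((n:ℝ) + 1) ≠ 0 := by positivity
  unfold T
  show ascFac a n * (a + n) * (ascFac b n * (b + n)) /
      (ascFac c n * (c + n) * ((n + 1) * n.factorial : ℕ)) = _
  push_cast
  field_simp

omit ha hb hc in
lemma tendsto_ratio_aux (p q : ℝ) (hq : 0 ≤ q) :
    Tendsto (fun n : ℕ => (p + n) / (q + n)) atTop (𝓝 1) := by
  have h1 : Tendsto (fun n : ℕ => q + (n:ℝ)) atTop atTop :=
    tendsto_atTop_add_const_left _ _ tendsto_natCast_atTop_atTop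
  have h2 : Tendsto (fun n : ℕ => (p - q) / (q + n)) atTop (𝓝 0) :=
    Tendsto.div_atTop tendsto_const_nhds h1
  have h3 : Tendsto (fun n : ℕ => 1 + (p - q) / (q + n)) atTop (𝓝 (1 + 0)) :=
    tendsto_const_nhds.add h2
  rw [add_zero] at h3
  refine h3.congr' ?_
  filter_upwards [eventually_gt_atTop 0] with n hn
  have : q + (n:ℝ) ≠ 0 := by
    have : (0:ℝ) < n := by exact_mod_cast hn
    positivity
  field_simp
  ring

end HypAux

section Part2
namespace HypAux
variable {a b c : ℝ} (ha : 0 < a) (hb : 0 < b) (hc : 0 < c)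
include ha hb hc

lemma tendsto_R :
    Tendsto (fun n : ℕ => (a + n) * (b + n) / ((c + n) * (n + 1))) atTop (𝓝 1) := by
  have h1 := tendsto_ratio_aux a 1 zero_le_one
  have h2 := tendsto_ratio_aux b c hc.le
  have := h1.mul h2
  rw [one_mul] at this
  refine this.congr' ?_
  filter_upwards [eventually_gt_atTop 0] with n hn
  have hn' : (0:ℝ) < n := by exact_mod_cast hn
  have : (1:ℝ) + n ≠ 0 := by positivity
  have : c + (n:ℝ) ≠ 0 := by positivity
  field_simp
  ring

omit ha hb hc in
lemma summable_of_ratio {f : ℕ → ℝ} {r : ℝ} (hr : r < 1)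
    (hf : ∀ n, 0 < f n)
    (hrat : Tendsto (fun n => f (n + 1) / f n) atTop (𝓝 r)) : Summable f := by
  apply summable_of_ratio_test_tendsto_lt_one hr
    (Eventually.of_forall fun n => (hf n).ne')
  refine hrat.congr fun n => ?_
  rw [Real.norm_eq_abs, Real.norm_eq_abs, abs_of_pos (hf n), abs_of_pos (hf (n+1))]

lemma summable_T {r : ℝ} (hr0 : 0 < r) (hr : r < 1) :
    Summable (fun n : ℕ => T a b c n * r ^ n) := by
  refine summable_of_ratio hr
    (fun n => mul_pos (T_pos ha hb hc n) (pow_pos hr0 n)) ?_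
  have := (tendsto_R ha hb hc).mul_const r
  rw [one_mul] at this
  refine this.congr fun n => ?_
  rw [T_succ hc]
  have h1 := (T_pos ha hb hc n).ne'
  have h2 := (pow_pos hr0 n).ne'
  field_simp
  ring

lemma summable_S2 {r : ℝ} (hr0 : 0 < r) (hr : r < 1) :
    Summable (fun n : ℕ => ((n:ℝ) + 1) * T a b c (n + 1) * r ^ n) := by
  refine summable_of_ratio hr (fun n => by
    have := T_pos ha hb hc (n+1); positivity) ?_
  have h1 := tendsto_ratio_aux 2 1 zero_le_one
  have h2 := ((tendsto_R ha hb hc).comp (tendsto_add_atTop_nat 1))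
  have h3 := (h1.mul h2).mul_const r
  rw [one_mul, one_mul] at h3
  refine h3.congr fun n => ?_
  rw [T_succ hc (n+1)]
  simp only [Function.comp_apply]
  have p1 := (T_pos ha hb hc (n+1)).ne'
  have p2 := (pow_pos hr0 n).ne'
  have p3 : ((n:ℝ)+1) ≠ 0 := by positivity
  have p4 : ((n:ℝ)+1+1) ≠ 0 := by positivity
  have p5 : c + ((n:ℝ)+1) ≠ 0 := by positivity
  push_cast
  field_simp
  ring

lemma summable_Su {r : ℝ} (hr0 : 0 < r) (hr : r < 1) :
    Summable (fun n : ℕ => T a b c n * ((n:ℝ) * r ^ (n - 1))) := by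
  refine (_root_.summable_nat_add_iff 1).mp
    ((summable_S2 ha hb hc hr0 hr).congr fun n => ?_)
  simp only [Nat.add_sub_cancel]
  push_cast
  ring

end HypAux
end Part2

section Part3
namespace HypAux
open Set
variable {a b c : ℝ} (ha : 0 < a) (hb : 0 < b) (hc : 0 < c)
include ha hb hc

/-- the derivative series -/
def D (a b c y : ℝ) : ℝ := ∑' n : ℕ, ((n:ℝ) + 1) * T a b c (n + 1) * y ^ n

lemma hasDerivAt_F {y : ℝ} (hy0 : 0 < y) (hy1 : y < 1) :
    HasDerivAt (fun x => ∑' n : ℕ, T a b c n * x ^ n) (D a b c y) y := by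
  set r : ℝ := (1 + y) / 2 with hr
  have hyr : y < r := by rw [hr]; linarith
  have hr0 : 0 < r := by rw [hr]; linarith
  have hr1 : r < 1 := by rw [hr]; linarith
  have hu := summable_Su ha hb hc hr0 hr1
  have hbound : ∀ (n : ℕ) (z : ℝ), z ∈ Ioo (-r) r →
      ‖T a b c n * ((n:ℝ) * z ^ (n - 1))‖ ≤ T a b c n * ((n:ℝ) * r ^ (n - 1)) := by
    intro n z hz
    have hzr : |z| ≤ r := by
      rw [abs_le]; exact ⟨hz.1.le, hz.2.le⟩
    rw [norm_mul, norm_mul, Real.norm_eq_abs, Real.norm_eq_abs, Real.norm_eq_abs,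
      abs_of_pos (T_pos ha hb hc n), Nat.abs_cast, abs_pow]
    have h1 : |z| ^ (n-1) ≤ r ^ (n-1) := pow_le_pow_left₀ (abs_nonneg z) hzr _
    have h2 : (0:ℝ) ≤ (n:ℝ) := n.cast_nonneg
    have h3 := (T_pos ha hb hc n).le
    gcongr
  have key := hasDerivAt_tsum_of_isPreconnected hu isOpen_Ioo
    (convex_Ioo (-r) r).isPreconnected
    (fun n z _ => (hasDerivAt_pow n z).const_mul (T a b c n))
    hbound (y₀ := y) ⟨by linarith, hyr⟩ (summable_T ha hb hc hy0 hy1)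
    (y := y) ⟨by linarith, hyr⟩
  refine key.congr_deriv (Eq.symm ?_)
  have hs : Summable (fun n : ℕ => T a b c n * ((n:ℝ) * y ^ (n - 1))) :=
    summable_Su ha hb hc hy0 hy1
  rw [D, Summable.tsum_eq_zero_add hs]
  simp only [Nat.cast_zero, zero_mul, mul_zero, zero_add]
  refine tsum_congr fun n => ?_
  simp only [Nat.add_sub_cancel]
  push_cast
  ring

end HypAux
end Part3

section Part4
namespace HypAux
open Set
variable {a b c : ℝ} (ha : 0 < a) (hb : 0 < b) (hc : 0 < c)
include ha hb hc

/-- coefficients of `F'(x)(1-x)` -/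
def C (a b c : ℝ) (n : ℕ) : ℝ := ((n:ℝ) + 1) * T a b c (n + 1) - (n:ℝ) * T a b c n

lemma C_eq (n : ℕ) :
    C a b c n = T a b c n * ((a * b + (a + b - c) * n) / (c + n)) := by
  have hcn : c + (n:ℝ) ≠ 0 := by positivity
  have hn1 : ((n:ℝ) + 1) ≠ 0 := by positivity
  rw [C, T_succ hc]
  field_simp
  ring

lemma C_nonneg (hab : a + b ≥ c) (n : ℕ) : 0 ≤ C a b c n := by
  rw [C_eq ha hb hc]
  have h1 : (0:ℝ) ≤ a * b + (a + b - c) * n := by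
    have : (0:ℝ) ≤ (a + b - c) * n := mul_nonneg (by linarith) n.cast_nonneg
    nlinarith
  have h2 : (0:ℝ) < c + n := by positivity
  exact mul_nonneg (T_pos ha hb hc n).le (div_nonneg h1 h2.le)

lemma C_one_pos (hab : a + b ≥ c) : 0 < C a b c 1 := by
  rw [C_eq ha hb hc]
  have h1 : (0:ℝ) < a * b + (a + b - c) * (1:ℕ) := by
    have : (0:ℝ) ≤ a + b - c := by linarith
    push_cast
    nlinarith
  have h2 : (0:ℝ) < c + (1:ℕ) := by positivity
  exact mul_pos (T_pos ha hb hc 1) (div_pos h1 h2)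

lemma summable_C {y : ℝ} (hy0 : 0 < y) (hy1 : y < 1) (hab : a + b ≥ c) :
    Summable (fun n : ℕ => C a b c n * y ^ n) := by
  refine Summable.of_nonneg_of_le
    (fun n => mul_nonneg (C_nonneg ha hb hc hab n) (pow_pos hy0 n).le)
    (fun n => ?_) (summable_S2 ha hb hc hy0 hy1)
  have : C a b c n ≤ ((n:ℝ) + 1) * T a b c (n + 1) := by
    rw [C]
    have : (0:ℝ) ≤ (n:ℝ) * T a b c n :=
      mul_nonneg n.cast_nonneg (T_pos ha hb hc n).le
    linarith
  exact mul_le_mul_of_nonneg_right this (pow_pos hy0 n).le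

lemma D_mul (hab : a + b ≥ c) {y : ℝ} (hy0 : 0 < y) (hy1 : y < 1) :
    D a b c y * (1 - y) = ∑' n : ℕ, C a b c n * y ^ n := by
  have hS2 := summable_S2 ha hb hc hy0 hy1
  have hS1 : Summable (fun n : ℕ => (n:ℝ) * T a b c n * y ^ n) := by
    refine (_root_.summable_nat_add_iff 1).mp ((hS2.mul_left y).congr fun n => ?_)
    push_cast
    ring
  have h1 : D a b c y * y = ∑' n : ℕ, (n:ℝ) * T a b c n * y ^ n := by
    rw [Summable.tsum_eq_zero_add hS1]
    simp only [Nat.cast_zero, zero_mul, zero_add]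
    rw [D, ← tsum_mul_right]
    refine tsum_congr fun n => ?_
    push_cast
    ring
  have : D a b c y * (1 - y) = D a b c y - D a b c y * y := by ring
  rw [this, h1, D, ← Summable.tsum_sub hS2 hS1]
  refine tsum_congr fun n => ?_
  rw [C]
  ring

lemma phi_strictMono (hab : a + b ≥ c) {y₁ y₂ : ℝ} (h0 : 0 < y₁) (h12 : y₁ < y₂)
    (h21 : y₂ < 1) :
    (∑' n : ℕ, C a b c n * y₁ ^ n) < ∑' n : ℕ, C a b c n * y₂ ^ n := by
  have h02 : 0 < y₂ := h0.trans h12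
  refine Summable.tsum_lt_tsum (i := 1) (fun n => ?_) ?_
    (summable_C ha hb hc h0 (h12.trans h21) hab) (summable_C ha hb hc h02 h21 hab)
  · exact mul_le_mul_of_nonneg_left
      (pow_le_pow_left₀ h0.le h12.le n) (C_nonneg ha hb hc hab n)
  · simp only [pow_one]
    exact mul_lt_mul_of_pos_left h12 (C_one_pos ha hb hc hab)

end HypAux
end Part4

section Part5
namespace HypAux
open Set Real
variable {a b c : ℝ} (ha : 0 < a) (hb : 0 < b) (hc : 0 < c)
include ha hb hc

omit ha hb hc in
lemma hyperF_eq (x : ℝ) : hyperF a b c x = ∑' n : ℕ, T a b c n * x ^ n := rfl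

omit ha hb hc in
lemma x_mem {t : ℝ} (ht : 0 < t) : 0 < 1 - exp (-t) ∧ 1 - exp (-t) < 1 := by
  constructor
  · have : exp (-t) < exp 0 := Real.exp_lt_exp.mpr (by linarith)
    rw [Real.exp_zero] at this
    linarith
  · have := Real.exp_pos (-t)
    linarith

lemma hasDerivAt_g {t : ℝ} (ht : 0 < t) :
    HasDerivAt (fun t => hyperF a b c (1 - exp (-t)))
      (D a b c (1 - exp (-t)) * exp (-t)) t := by
  have hx : HasDerivAt (fun t : ℝ => 1 - exp (-t)) (exp (-t)) t := by
    have h1 : HasDerivAt (fun t : ℝ => exp (-t)) (exp (-t) * (-1)) t :=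
      (Real.hasDerivAt_exp (-t)).comp t (hasDerivAt_neg t)
    have h2 := h1.const_sub 1
    refine h2.congr_deriv ?_
    ring
  obtain ⟨h0, h1⟩ := x_mem ht
  have hF := hasDerivAt_F ha hb hc h0 h1
  simp only [hyperF_eq]
  exact hF.comp t hx

lemma deriv_g (hab : a + b ≥ c) {t : ℝ} (ht : 0 < t) :
    deriv (fun t => hyperF a b c (1 - exp (-t))) t =
      ∑' n : ℕ, C a b c n * (1 - exp (-t)) ^ n := by
  rw [(hasDerivAt_g ha hb hc ht).deriv]
  obtain ⟨h0, h1⟩ := x_mem ht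
  rw [show D a b c (1 - exp (-t)) * exp (-t)
      = D a b c (1 - exp (-t)) * (1 - (1 - exp (-t))) by ring,
    D_mul ha hb hc hab h0 h1]

lemma strictConvex_g (hab : a + b ≥ c) :
    StrictConvexOn ℝ (Ioi (0:ℝ)) (fun t => hyperF a b c (1 - exp (-t))) := by
  refine StrictMonoOn.strictConvexOn_of_deriv (convex_Ioi 0)
    (fun t ht => (hasDerivAt_g ha hb hc ht).continuousAt.continuousWithinAt) ?_
  rw [interior_Ioi]
  intro t₁ h₁ t₂ h₂ h₁₂
  rw [deriv_g ha hb hc hab h₁, deriv_g ha hb hc hab h₂]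
  have hlt : 1 - exp (-t₁) < 1 - exp (-t₂) := by
    have : exp (-t₂) < exp (-t₁) := Real.exp_lt_exp.mpr (by linarith)
    linarith
  exact phi_strictMono ha hb hc hab (x_mem h₁).1 hlt (x_mem h₂).2

end HypAux
end Part5

theorem stmt12 (a b c : ℝ) (ha : 0 < a) (hb : 0 < b) (hc : 0 < c)
    (h : a + b ≥ c) :
    ConvexOn ℝ (Set.Ioi 0) (fun t => hyperF a b c (1 - Real.exp (-t))) ∧
      ∀ x ∈ Set.Ioo (0:ℝ) 1, ∀ y ∈ Set.Ioo (0:ℝ) 1,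
        hyperF a b c (1 - Real.sqrt ((1 - x) * (1 - y))) ≤
            (hyperF a b c x + hyperF a b c y) / 2 ∧
          (hyperF a b c (1 - Real.sqrt ((1 - x) * (1 - y))) =
              (hyperF a b c x + hyperF a b c y) / 2 ↔ x = y) := by
  have hsc := HypAux.strictConvex_g ha hb hc h
  refine ⟨hsc.convexOn, ?_⟩
  rintro x ⟨hx0, hx1⟩ y ⟨hy0, hy1⟩
  set s : ℝ := -Real.log (1 - x) with hs_def
  set t : ℝ := -Real.log (1 - y) with ht_def
  have h1x : (0:ℝ) < 1 - x := by linarith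
  have h1y : (0:ℝ) < 1 - y := by linarith
  have hes : Real.exp (-s) = 1 - x := by rw [hs_def, neg_neg, Real.exp_log h1x]
  have het : Real.exp (-t) = 1 - y := by rw [ht_def, neg_neg, Real.exp_log h1y]
  have hs0 : 0 < s := by
    rw [hs_def]
    have := Real.log_neg h1x (by linarith)
    linarith
  have ht0 : 0 < t := by
    rw [ht_def]
    have := Real.log_neg h1y (by linarith)
    linarith
  have hgs : hyperF a b c (1 - Real.exp (-s)) = hyperF a b c x := by rw [hes]; ring_nf
  have hgt : hyperF a b c (1 - Real.exp (-t)) = hyperF a b c y := by rw [het]; ring_nf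
  have hsqrt : Real.sqrt ((1 - x) * (1 - y)) = Real.exp (-((s + t) / 2)) := by
    have h2 : Real.exp (-((s + t) / 2)) ^ 2 = (1 - x) * (1 - y) := by
      rw [sq, ← Real.exp_add, ← hes, ← het, ← Real.exp_add]
      ring_nf
    rw [← h2, Real.sqrt_sq (Real.exp_pos _).le]
  have hmid : (1:ℝ)/2 * s + (1:ℝ)/2 * t = (s + t) / 2 := by ring
  have hxy_st : x = y ↔ s = t := by
    constructor
    · intro hxy; rw [hs_def, ht_def, hxy]
    · intro hst
      have : Real.exp (-s) = Real.exp (-t) := by rw [hst]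
      rw [hes, het] at this
      linarith
  have hle : hyperF a b c (1 - Real.sqrt ((1 - x) * (1 - y))) ≤
      (hyperF a b c x + hyperF a b c y) / 2 := by
    have := hsc.convexOn.2 (Set.mem_Ioi.mpr hs0) (Set.mem_Ioi.mpr ht0)
      (by norm_num : (0:ℝ) ≤ 1/2) (by norm_num : (0:ℝ) ≤ 1/2) (by norm_num)
    simp only [smul_eq_mul] at this
    rw [hmid, hgs, hgt] at this
    rw [hsqrt]
    linarith
  refine ⟨hle, ?_, fun hxy => ?_⟩
  · intro heq
    by_contra hxy
    have hst : s ≠ t := fun hst => hxy (hxy_st.mpr hst)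
    have := hsc.2 (Set.mem_Ioi.mpr hs0) (Set.mem_Ioi.mpr ht0) hst
      (by norm_num : (0:ℝ) < 1/2) (by norm_num : (0:ℝ) < 1/2) (by norm_num)
    simp only [smul_eq_mul] at this
    rw [hmid, hgs, hgt] at this
    rw [hsqrt] at heq
    linarith
  · subst hxy
    rw [Real.sqrt_mul_self h1x.le]
    ring_nf
end HypAux
end
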